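/- arXiv:1508.00845 — 5 statements merged into one kernel-verified Lean document; each statement's English description precedes it below -/
import Mathlib

section
/- Let 0 < λ < m. Then every λ-invariant measure ν of the subcritical BGW process killed at 0 is trivial, i.e. ν(j) = 0 for all j ≥ 1. -/
open MeasureTheory Real Set

/-- `convPow q i j` is the `i`-fold convolution power of the offspring distribution `q`
evaluated at `j`, i.e. the transition matrix `P₀(i,j)` of the BGW process. -/
noncomputable def convPow (q : ℕ → ℝ) : ℕ → ℕ → ℝ
  | 0, j => if j = 0 then 1 else 0
  | i + 1, j => ∑ k ∈ Finset.range (j + 1), convPow q i (j - k) * q k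

/-- `ν` is a `lam`-invariant measure on `ℕ* = {1,2,…}` of the BGW process killed at 0. -/
def IsInvMeasure (q : ℕ → ℝ) (lam : ℝ) (ν : ℕ → ℝ) : Prop :=
  (∀ n, 0 ≤ ν n) ∧ ν 0 = 0 ∧
  ∀ j : ℕ, 1 ≤ j →
    Summable (fun i => ν i * convPow q i j) ∧
    ∑' i, ν i * convPow q i j = lam * ν j

open scoped ENNReal

namespace BGW

lemma convPow_nonneg {q : ℕ → ℝ} (hq0 : ∀ k, 0 ≤ q k) : ∀ i j, 0 ≤ convPow q i j := by
  intro i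
  induction i with
  | zero => intro j; simp only [convPow]; split <;> norm_num
  | succ i ih =>
      intro j
      simp only [convPow]
      exact Finset.sum_nonneg fun k _ => mul_nonneg (ih _) (hq0 k)

lemma enn_cauchy (a b : ℕ → ℝ≥0∞) :
    ∑' j : ℕ, ∑ k ∈ Finset.range (j + 1), a (j - k) * b k = (∑' n, a n) * ∑' n, b n := by
  have h1 : ∀ j : ℕ, ∑ k ∈ Finset.range (j + 1), a (j - k) * b k
      = ∑' k : ℕ, if k ≤ j then a (j - k) * b k else 0 := by
    intro j
    rw [tsum_eq_sum (s := Finset.range (j + 1)) ?_]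
    · exact Finset.sum_congr rfl fun k hk => by
        rw [if_pos (Nat.lt_succ_iff.mp (Finset.mem_range.mp hk))]
    · intro k hk
      exact if_neg fun h => hk (Finset.mem_range.mpr (Nat.lt_succ_iff.mpr h))
  calc ∑' j : ℕ, ∑ k ∈ Finset.range (j + 1), a (j - k) * b k
      = ∑' j : ℕ, ∑' k : ℕ, (if k ≤ j then a (j - k) * b k else 0) := tsum_congr h1
    _ = ∑' k : ℕ, ∑' j : ℕ, (if k ≤ j then a (j - k) * b k else 0) := ENNReal.tsum_comm
    _ = ∑' k : ℕ, ∑' n : ℕ, a n * b k := by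
        refine tsum_congr fun k => ?_
        have hinj : Function.Injective (fun n : ℕ => n + k) := add_left_injective k
        have hsupp : Function.support (fun j : ℕ => if k ≤ j then a (j - k) * b k else 0)
            ⊆ Set.range (fun n : ℕ => n + k) := by
          intro j hj
          by_cases h : k ≤ j
          · exact ⟨j - k, Nat.sub_add_cancel h⟩
          · simp only [Function.mem_support, if_neg h, ne_eq, not_true_eq_false] at hj
        have := hinj.tsum_eq (f := fun j : ℕ => if k ≤ j then a (j - k) * b k else 0) hsupp
        rw [← this]
        exact (tsum_congr fun n => by simp).symm
    _ = (∑' n, a n) * ∑' n, b n := by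
        rw [← ENNReal.tsum_mul_left]
        exact tsum_congr fun k => ENNReal.tsum_mul_right

lemma genfun {q : ℕ → ℝ} (hq0 : ∀ k, 0 ≤ q k) (S : ℝ≥0∞) :
    ∀ i : ℕ, ∑' j : ℕ, ENNReal.ofReal (convPow q i j) * S ^ j
      = (∑' k : ℕ, ENNReal.ofReal (q k) * S ^ k) ^ i := by
  intro i
  induction i with
  | zero =>
      rw [pow_zero, tsum_eq_single 0]
      · simp [convPow]
      · intro j hj; simp [convPow, hj]
  | succ i ih =>
      have hterm : ∀ j : ℕ, ENNReal.ofReal (convPow q (i + 1) j) * S ^ j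
          = ∑ k ∈ Finset.range (j + 1),
              (ENNReal.ofReal (convPow q i (j - k)) * S ^ (j - k))
              * (ENNReal.ofReal (q k) * S ^ k) := by
        intro j
        show ENNReal.ofReal (∑ k ∈ Finset.range (j + 1), convPow q i (j - k) * q k) * S ^ j = _
        rw [ENNReal.ofReal_sum_of_nonneg fun k _ => mul_nonneg (convPow_nonneg hq0 _ _) (hq0 k),
          Finset.sum_mul]
        refine Finset.sum_congr rfl fun k hk => ?_
        have hkj : k ≤ j := Nat.lt_succ_iff.mp (Finset.mem_range.mp hk)
        rw [ENNReal.ofReal_mul (convPow_nonneg hq0 _ _)]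
        have : S ^ j = S ^ (j - k) * S ^ k := by
          rw [← pow_add, Nat.sub_add_cancel hkj]
        rw [this]; ring
      rw [tsum_congr hterm]
      have h := enn_cauchy (fun n => ENNReal.ofReal (convPow q i n) * S ^ n)
        (fun k => ENNReal.ofReal (q k) * S ^ k)
      rw [h, ih, pow_succ]


noncomputable def frGen (q : ℕ → ℝ) (t : ℝ) : ℝ := ∑' k : ℕ, q k * t ^ k

section fr
variable {q : ℕ → ℝ}

lemma one_sub_pow_le' {t : ℝ} (ht0 : 0 ≤ t) (ht1 : t ≤ 1) :
    ∀ k : ℕ, 1 - t ^ k ≤ k * (1 - t) := by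
  intro k
  induction k with
  | zero => simp
  | succ k ih =>
      have h : 1 - t ^ (k + 1) = (1 - t) + t * (1 - t ^ k) := by ring
      rw [h]
      push_cast
      have h1 : t * (1 - t ^ k) ≤ 1 * (k * (1 - t)) := by
        apply mul_le_mul ht1 ih ?_ zero_le_one
        · nlinarith [pow_le_one₀ ht0 ht1 (n := k)]
      nlinarith

lemma fr_summable (hq0 : ∀ k, 0 ≤ q k) (hq1 : HasSum q 1) {t : ℝ} (ht0 : 0 ≤ t) (ht1 : t ≤ 1) :
    Summable (fun k : ℕ => q k * t ^ k) := by
  refine hq1.summable.of_nonneg_of_le (fun k => mul_nonneg (hq0 k) (pow_nonneg ht0 k)) ?_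
  intro k
  exact mul_le_of_le_one_right (hq0 k) (pow_le_one₀ ht0 ht1)

lemma fr_nonneg (hq0 : ∀ k, 0 ≤ q k) {t : ℝ} (ht0 : 0 ≤ t) : 0 ≤ frGen q t :=
  tsum_nonneg fun k => mul_nonneg (hq0 k) (pow_nonneg ht0 k)

lemma fr_zero : frGen q 0 = q 0 := by
  rw [frGen, tsum_eq_single 0]
  · norm_num
  · intro j hj; simp [zero_pow hj]

lemma fr_one (hq1 : HasSum q 1) : frGen q 1 = 1 := by
  simp only [frGen, one_pow, mul_one]
  exact hq1.tsum_eq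

lemma fr_mono (hq0 : ∀ k, 0 ≤ q k) (hq1 : HasSum q 1) {s t : ℝ} (hs : 0 ≤ s) (hst : s ≤ t) (ht : t ≤ 1) :
    frGen q s ≤ frGen q t := by
  refine Summable.tsum_le_tsum (fun k => ?_) (fr_summable hq0 hq1 hs (hst.trans ht))
    (fr_summable hq0 hq1 (hs.trans hst) ht)
  exact mul_le_mul_of_nonneg_left (pow_le_pow_left₀ hs hst k) (hq0 k)

lemma fr_le_one (hq0 : ∀ k, 0 ≤ q k) (hq1 : HasSum q 1) {t : ℝ} (ht0 : 0 ≤ t) (ht1 : t ≤ 1) : frGen q t ≤ 1 := by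
  have := fr_mono hq0 hq1 ht0 ht1 le_rfl
  rwa [fr_one hq1] at this

lemma one_sub_fr_eq (hq0 : ∀ k, 0 ≤ q k) (hq1 : HasSum q 1) {t : ℝ} (ht0 : 0 ≤ t) (ht1 : t ≤ 1) :
    1 - frGen q t = ∑' k : ℕ, q k * (1 - t ^ k) := by
  have hs1 : Summable fun k : ℕ => q k * t ^ k := fr_summable hq0 hq1 ht0 ht1
  refine Eq.symm ?_
  calc ∑' k : ℕ, q k * (1 - t ^ k) = ∑' k : ℕ, (q k - q k * t ^ k) :=
        tsum_congr fun k => mul_one_sub _ _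
    _ = (∑' k : ℕ, q k) - ∑' k : ℕ, q k * t ^ k := Summable.tsum_sub hq1.summable hs1
    _ = 1 - frGen q t := by rw [hq1.tsum_eq]; rfl

lemma summable_one_sub (hq0 : ∀ k, 0 ≤ q k) (hq1 : HasSum q 1) {t : ℝ} (ht0 : 0 ≤ t) (ht1 : t ≤ 1) :
    Summable (fun k : ℕ => q k * (1 - t ^ k)) := by
  have := hq1.summable.sub (fr_summable hq0 hq1 ht0 ht1)
  simpa [mul_one_sub] using this

lemma one_sub_fr_le (hq0 : ∀ k, 0 ≤ q k) (hq1 : HasSum q 1) {m : ℝ} (hm : HasSum (fun k : ℕ => (k : ℝ) * q k) m)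
    {t : ℝ} (ht0 : 0 ≤ t) (ht1 : t ≤ 1) :
    1 - frGen q t ≤ m * (1 - t) := by
  rw [one_sub_fr_eq hq0 hq1 ht0 ht1]
  have hsum2 : Summable (fun k : ℕ => (k : ℝ) * q k * (1 - t)) := hm.summable.mul_right _
  have hle : ∀ k : ℕ, q k * (1 - t ^ k) ≤ (k : ℝ) * q k * (1 - t) := by
    intro k
    have := one_sub_pow_le' ht0 ht1 k
    calc q k * (1 - t ^ k) ≤ q k * ((k : ℝ) * (1 - t)) :=
          mul_le_mul_of_nonneg_left this (hq0 k)
      _ = (k : ℝ) * q k * (1 - t) := by ring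
  calc ∑' k : ℕ, q k * (1 - t ^ k) ≤ ∑' k : ℕ, (k : ℝ) * q k * (1 - t) :=
        Summable.tsum_le_tsum hle (summable_one_sub hq0 hq1 ht0 ht1) hsum2
    _ = m * (1 - t) := by rw [tsum_mul_right, hm.tsum_eq]

lemma one_sub_fr_ge (hq0 : ∀ k, 0 ≤ q k) (hq1 : HasSum q 1) (K : ℕ) {t : ℝ} (ht0 : 0 ≤ t) (ht1 : t ≤ 1) :
    (∑ k ∈ Finset.range K, (k : ℝ) * q k) * t ^ K * (1 - t) ≤ 1 - frGen q t := by
  rw [one_sub_fr_eq hq0 hq1 ht0 ht1]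
  have hstep : ∀ k ∈ Finset.range K, (k : ℝ) * q k * t ^ K * (1 - t) ≤ q k * (1 - t ^ k) := by
    intro k hk
    have hkK : k ≤ K := (Finset.mem_range.mp hk).le
    have hgeom : 1 - t ^ k = (1 - t) * ∑ i ∈ Finset.range k, t ^ i := by
      have := geom_sum_mul (x := t) (n := k)
      nlinarith [this]
    have hterm : (k : ℝ) * t ^ K ≤ ∑ i ∈ Finset.range k, t ^ i := by
      calc (k : ℝ) * t ^ K = ∑ _i ∈ Finset.range k, t ^ K := by
            rw [Finset.sum_const, Finset.card_range, nsmul_eq_mul]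
        _ ≤ ∑ i ∈ Finset.range k, t ^ i := by
            refine Finset.sum_le_sum fun i hi => ?_
            exact pow_le_pow_of_le_one ht0 ht1 (((Finset.mem_range.mp hi).le).trans hkK)
    calc (k : ℝ) * q k * t ^ K * (1 - t) = q k * ((1 - t) * ((k : ℝ) * t ^ K)) := by ring
      _ ≤ q k * ((1 - t) * ∑ i ∈ Finset.range k, t ^ i) := by
          refine mul_le_mul_of_nonneg_left (mul_le_mul_of_nonneg_left hterm (by linarith)) (hq0 k)
      _ = q k * (1 - t ^ k) := by rw [← hgeom]
  calc (∑ k ∈ Finset.range K, (k : ℝ) * q k) * t ^ K * (1 - t)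
      = ∑ k ∈ Finset.range K, (k : ℝ) * q k * t ^ K * (1 - t) := by
        rw [Finset.sum_mul, Finset.sum_mul]
    _ ≤ ∑ k ∈ Finset.range K, q k * (1 - t ^ k) := Finset.sum_le_sum hstep
    _ ≤ ∑' k : ℕ, q k * (1 - t ^ k) := by
        refine Summable.sum_le_tsum _ (fun k _ => ?_) (summable_one_sub hq0 hq1 ht0 ht1)
        exact mul_nonneg (hq0 k) (by nlinarith [pow_le_one₀ ht0 ht1 (n := k)])

lemma fr_lt_one (hq0 : ∀ k, 0 ≤ q k) (hq1 : HasSum q 1) {j₁ : ℕ} (hj₁ : 1 ≤ j₁) (hqj₁ : 0 < q j₁)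
    {t : ℝ} (ht0 : 0 ≤ t) (ht1 : t < 1) : frGen q t < 1 := by
  have h : q j₁ * (1 - t ^ j₁) ≤ 1 - frGen q t := by
    rw [one_sub_fr_eq hq0 hq1 ht0 ht1.le]
    refine Summable.le_tsum (summable_one_sub hq0 hq1 ht0 ht1.le) j₁ (fun k _ => ?_)
    exact mul_nonneg (hq0 k) (by nlinarith [pow_le_one₀ ht0 ht1.le (n := k)])
  have hpow : t ^ j₁ < 1 := pow_lt_one₀ ht0 ht1 (by omega)
  nlinarith

end fr

section comb
variable {q : ℕ → ℝ}

lemma convPow_zero_right (q : ℕ → ℝ) : ∀ i : ℕ, convPow q i 0 = q 0 ^ i := by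
  intro i
  induction i with
  | zero => simp [convPow]
  | succ i ih =>
      show ∑ k ∈ Finset.range (0 + 1), convPow q i (0 - k) * q k = q 0 ^ (i + 1)
      rw [Finset.sum_range_one]
      simp [ih, pow_succ]

lemma convPow_pair (hq0 : ∀ k, 0 ≤ q k) {j₁ : ℕ} (hj₁ : 1 ≤ j₁) {j : ℕ} (hj : j₁ ≤ j) (i : ℕ) :
    convPow q i j * q 0 + convPow q i (j - j₁) * q j₁ ≤ convPow q (i + 1) j := by
  show _ ≤ ∑ k ∈ Finset.range (j + 1), convPow q i (j - k) * q k
  have hsub : ({0, j₁} : Finset ℕ) ⊆ Finset.range (j + 1) := by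
    intro k hk
    simp only [Finset.mem_insert, Finset.mem_singleton] at hk
    rcases hk with rfl | rfl <;> simp only [Finset.mem_range] <;> omega
  have h0 : (0 : ℕ) ≠ j₁ := by omega
  calc convPow q i j * q 0 + convPow q i (j - j₁) * q j₁
      = ∑ k ∈ ({0, j₁} : Finset ℕ), convPow q i (j - k) * q k := by
        rw [Finset.sum_pair h0]; simp
    _ ≤ ∑ k ∈ Finset.range (j + 1), convPow q i (j - k) * q k :=
        Finset.sum_le_sum_of_subset_of_nonneg hsub
          (fun k _ _ => mul_nonneg (convPow_nonneg hq0 _ _) (hq0 k))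

lemma convPow_lb1 (hq0 : ∀ k, 0 ≤ q k) {j₁ : ℕ} (hj₁ : 1 ≤ j₁) :
    ∀ i : ℕ, (i : ℝ) * q j₁ * q 0 ^ i ≤ convPow q i j₁ * q 0 := by
  intro i
  induction i with
  | zero =>
      simp only [Nat.cast_zero, zero_mul]
      exact mul_nonneg (convPow_nonneg hq0 _ _) (hq0 0)
  | succ i ih =>
      have hpair := convPow_pair hq0 hj₁ (le_refl j₁) i
      rw [Nat.sub_self, convPow_zero_right] at hpair
      push_cast
      rw [show ((i : ℝ) + 1) * q j₁ * q 0 ^ (i + 1)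
          = (i : ℝ) * q j₁ * q 0 ^ i * q 0 + q 0 ^ i * q j₁ * q 0 from by ring]
      calc (i : ℝ) * q j₁ * q 0 ^ i * q 0 + q 0 ^ i * q j₁ * q 0
          ≤ convPow q i j₁ * q 0 * q 0 + q 0 ^ i * q j₁ * q 0 :=
            add_le_add (mul_le_mul_of_nonneg_right ih (hq0 0)) le_rfl
        _ = (convPow q i j₁ * q 0 + q 0 ^ i * q j₁) * q 0 := by ring
        _ ≤ convPow q (i + 1) j₁ * q 0 := mul_le_mul_of_nonneg_right hpair (hq0 0)

lemma convPow_lb2 (hq0 : ∀ k, 0 ≤ q k) {j₁ : ℕ} (hj₁ : 1 ≤ j₁) :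
    ∀ i : ℕ, (i : ℝ) * ((i : ℝ) - 1) / 2 * q j₁ ^ 2 * q 0 ^ i ≤ convPow q i (2 * j₁) * q 0 ^ 2 := by
  intro i
  induction i with
  | zero =>
      norm_num
      exact mul_nonneg (convPow_nonneg hq0 _ _) (pow_nonneg (hq0 0) 2)
  | succ i ih =>
      have hpair := convPow_pair hq0 hj₁ (show j₁ ≤ 2 * j₁ by omega) i
      rw [show 2 * j₁ - j₁ = j₁ by omega] at hpair
      push_cast
      rw [show ((i : ℝ) + 1) * ((i : ℝ) + 1 - 1) / 2 * q j₁ ^ 2 * q 0 ^ (i + 1)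
          = (i : ℝ) * ((i : ℝ) - 1) / 2 * q j₁ ^ 2 * q 0 ^ i * q 0
            + (i : ℝ) * q j₁ * q 0 ^ i * (q j₁ * q 0) from by ring]
      calc (i : ℝ) * ((i : ℝ) - 1) / 2 * q j₁ ^ 2 * q 0 ^ i * q 0
            + (i : ℝ) * q j₁ * q 0 ^ i * (q j₁ * q 0)
          ≤ convPow q i (2 * j₁) * q 0 ^ 2 * q 0 + convPow q i j₁ * q 0 * (q j₁ * q 0) :=
            add_le_add (mul_le_mul_of_nonneg_right ih (hq0 0))
              (mul_le_mul_of_nonneg_right (convPow_lb1 hq0 hj₁ i)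
                (mul_nonneg (hq0 j₁) (hq0 0)))
        _ = (convPow q i (2 * j₁) * q 0 + convPow q i j₁ * q j₁) * q 0 ^ 2 := by ring
        _ ≤ convPow q (i + 1) (2 * j₁) * q 0 ^ 2 :=
            mul_le_mul_of_nonneg_right hpair (pow_nonneg (hq0 0) 2)

lemma nu_q0_summable (hq0 : ∀ k, 0 ≤ q k) {lam : ℝ} (hlam0 : 0 < lam) {ν : ℕ → ℝ}
    (hν : IsInvMeasure q lam ν) {j₁ : ℕ} (hj₁ : 1 ≤ j₁) (hqj₁ : 0 < q j₁)
    (hq00 : 0 < q 0) :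
    Summable (fun i : ℕ => ν i * q 0 ^ i) := by
  obtain ⟨hνn, hν0, hinv⟩ := hν
  obtain ⟨hsum, htsum⟩ := hinv (2 * j₁) (by omega)
  set B := lam * ν (2 * j₁) * q 0 ^ 2 / q j₁ ^ 2 with hB
  have hkey : ∀ i : ℕ, ν i * q 0 ^ i * ((i : ℝ) * ((i : ℝ) - 1) / 2) ≤ B := by
    intro i
    have h1 : ν i * convPow q i (2 * j₁) ≤ lam * ν (2 * j₁) := by
      rw [← htsum]
      exact Summable.le_tsum hsum i fun k _ => mul_nonneg (hνn k) (convPow_nonneg hq0 _ _)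
    have h2 := convPow_lb2 hq0 hj₁ i
    have h3 : ν i * ((i : ℝ) * ((i : ℝ) - 1) / 2 * q j₁ ^ 2 * q 0 ^ i)
        ≤ lam * ν (2 * j₁) * q 0 ^ 2 := by
      calc ν i * ((i : ℝ) * ((i : ℝ) - 1) / 2 * q j₁ ^ 2 * q 0 ^ i)
          ≤ ν i * (convPow q i (2 * j₁) * q 0 ^ 2) :=
            mul_le_mul_of_nonneg_left h2 (hνn i)
        _ = ν i * convPow q i (2 * j₁) * q 0 ^ 2 := by ring
        _ ≤ lam * ν (2 * j₁) * q 0 ^ 2 :=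
            mul_le_mul_of_nonneg_right h1 (by positivity)
    rw [hB, le_div_iff₀ (by positivity)]
    nlinarith [h3]
  rw [← summable_nat_add_iff 2]
  have hb : ∀ n : ℕ, ν (n + 2) * q 0 ^ (n + 2) ≤ 2 * B / ((n : ℝ) + 1) ^ 2 := by
    intro n
    have hk := hkey (n + 2)
    push_cast at hk
    have hnn : 0 ≤ ν (n + 2) * q 0 ^ (n + 2) := mul_nonneg (hνn _) (pow_nonneg hq00.le _)
    rw [le_div_iff₀ (by positivity)]
    nlinarith [hk, hnn, mul_nonneg hnn (show (0:ℝ) ≤ (n : ℝ) + 1 by positivity)]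
  refine Summable.of_nonneg_of_le (fun n => mul_nonneg (hνn _) (pow_nonneg hq00.le _)) hb ?_
  have h4 : Summable (fun n : ℕ => 1 / ((n : ℝ) + 1) ^ 2) := by
    have := (summable_nat_add_iff 1).mpr
      (Real.summable_one_div_nat_pow.mpr (by norm_num : 1 < 2))
    push_cast at this
    exact this
  simpa [div_eq_mul_inv] using h4.mul_left (2 * B)

end comb

section del
variable {q : ℕ → ℝ} {ν : ℕ → ℝ}

lemma f_ofReal (hq0 : ∀ k, 0 ≤ q k) (hq1 : HasSum q 1) {t : ℝ} (ht0 : 0 ≤ t) (ht1 : t ≤ 1) :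
    ∑' k : ℕ, ENNReal.ofReal (q k) * (ENNReal.ofReal t) ^ k = ENNReal.ofReal (frGen q t) := by
  rw [frGen, ENNReal.ofReal_tsum_of_nonneg
    (fun k => mul_nonneg (hq0 k) (pow_nonneg ht0 k)) (fr_summable hq0 hq1 ht0 ht1)]
  exact tsum_congr fun k => by rw [ENNReal.ofReal_mul (hq0 k), ENNReal.ofReal_pow ht0]

noncomputable def Del (ν : ℕ → ℝ) (S T : ℝ≥0∞) : ℝ≥0∞ :=
  ∑' j : ℕ, ENNReal.ofReal (ν j) * (T ^ j - S ^ j)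

lemma Del_self (S : ℝ≥0∞) : Del ν S S = 0 := by simp [Del]

lemma Del_add {A B C : ℝ≥0∞} (hAB : A ≤ B) (hBC : B ≤ C) :
    Del ν A C = Del ν A B + Del ν B C := by
  rw [Del, Del, Del, ← ENNReal.tsum_add]
  refine tsum_congr fun j => ?_
  rw [← mul_add]
  congr 1
  rw [add_comm]
  exact (tsub_add_tsub_cancel (pow_le_pow_left' hBC j) (pow_le_pow_left' hAB j)).symm

lemma Del_zero_left (hν0 : ν 0 = 0) (T : ℝ≥0∞) :
    Del ν 0 T = ∑' j : ℕ, ENNReal.ofReal (ν j) * T ^ j := by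
  refine tsum_congr fun j => ?_
  cases j with
  | zero => simp [hν0]
  | succ j => rw [zero_pow (Nat.succ_ne_zero j), tsub_zero]

lemma key_step (hq0 : ∀ k, 0 ≤ q k) (hq1 : HasSum q 1) {lam : ℝ} (hlam0 : 0 ≤ lam)
    (hν : IsInvMeasure q lam ν) {s t : ℝ} (hs : 0 ≤ s) (hst : s ≤ t) (ht : t ≤ 1) :
    ENNReal.ofReal lam * Del ν (ENNReal.ofReal s) (ENNReal.ofReal t)
      = Del ν (ENNReal.ofReal (frGen q s)) (ENNReal.ofReal (frGen q t)) := by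
  obtain ⟨hνn, hν0, hinv⟩ := hν
  set S := ENNReal.ofReal s with hSdef
  set T := ENNReal.ofReal t with hTdef
  have hEinv : ∀ j : ℕ, 1 ≤ j →
      ∑' i : ℕ, ENNReal.ofReal (ν i) * ENNReal.ofReal (convPow q i j)
        = ENNReal.ofReal lam * ENNReal.ofReal (ν j) := by
    intro j hj
    obtain ⟨hsum, htsum⟩ := hinv j hj
    calc ∑' i : ℕ, ENNReal.ofReal (ν i) * ENNReal.ofReal (convPow q i j)
        = ∑' i : ℕ, ENNReal.ofReal (ν i * convPow q i j) :=
          tsum_congr fun i => (ENNReal.ofReal_mul (hνn i)).symm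
      _ = ENNReal.ofReal (∑' i, ν i * convPow q i j) :=
          (ENNReal.ofReal_tsum_of_nonneg
            (fun i => mul_nonneg (hνn i) (convPow_nonneg hq0 i j)) hsum).symm
      _ = _ := by rw [htsum, ENNReal.ofReal_mul hlam0]
  have hfS : ∑' k : ℕ, ENNReal.ofReal (q k) * S ^ k = ENNReal.ofReal (frGen q s) :=
    f_ofReal hq0 hq1 hs (hst.trans ht)
  have hfT : ∑' k : ℕ, ENNReal.ofReal (q k) * T ^ k = ENNReal.ofReal (frGen q t) :=
    f_ofReal hq0 hq1 (hs.trans hst) ht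
  have hfSle1 : ENNReal.ofReal (frGen q s) ≤ 1 := by
    rw [← ENNReal.ofReal_one]
    exact ENNReal.ofReal_le_ofReal (fr_le_one hq0 hq1 hs (hst.trans ht))
  have hinner : ∀ i : ℕ, ∑' j : ℕ, ENNReal.ofReal (convPow q i j) * (T ^ j - S ^ j)
      = (ENNReal.ofReal (frGen q t)) ^ i - (ENNReal.ofReal (frGen q s)) ^ i := by
    intro i
    have h1 : ∀ j : ℕ, ENNReal.ofReal (convPow q i j) * (T ^ j - S ^ j)
        = ENNReal.ofReal (convPow q i j) * T ^ j - ENNReal.ofReal (convPow q i j) * S ^ j :=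
      fun j => ENNReal.mul_sub fun _ _ => ENNReal.ofReal_ne_top
    have hST : ∀ j : ℕ, S ^ j ≤ T ^ j :=
      fun j => pow_le_pow_left' (ENNReal.ofReal_le_ofReal hst) j
    have hfin : ∑' j : ℕ, ENNReal.ofReal (convPow q i j) * S ^ j ≠ ⊤ := by
      rw [genfun hq0 S i, hfS]
      exact ne_top_of_le_ne_top (by simp) (pow_le_one' hfSle1 i)
    rw [tsum_congr h1, ENNReal.tsum_sub hfin (fun j => mul_le_mul_right (hST j) _),
      genfun hq0 S i, genfun hq0 T i, hfS, hfT]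
  calc ENNReal.ofReal lam * Del ν S T
      = ∑' j : ℕ, ENNReal.ofReal lam * (ENNReal.ofReal (ν j) * (T ^ j - S ^ j)) :=
        ENNReal.tsum_mul_left.symm
    _ = ∑' j : ℕ, (∑' i : ℕ, ENNReal.ofReal (ν i) * ENNReal.ofReal (convPow q i j))
          * (T ^ j - S ^ j) := by
        refine tsum_congr fun j => ?_
        rcases Nat.eq_zero_or_pos j with hj | hj
        · subst hj; simp
        · rw [← mul_assoc, hEinv j hj]
    _ = ∑' j : ℕ, ∑' i : ℕ, (ENNReal.ofReal (ν i) * ENNReal.ofReal (convPow q i j))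
          * (T ^ j - S ^ j) := tsum_congr fun j => ENNReal.tsum_mul_right.symm
    _ = ∑' i : ℕ, ∑' j : ℕ, (ENNReal.ofReal (ν i) * ENNReal.ofReal (convPow q i j))
          * (T ^ j - S ^ j) := ENNReal.tsum_comm
    _ = ∑' i : ℕ, ENNReal.ofReal (ν i)
          * ∑' j : ℕ, ENNReal.ofReal (convPow q i j) * (T ^ j - S ^ j) := by
        refine tsum_congr fun i => ?_
        rw [← ENNReal.tsum_mul_left]
        exact tsum_congr fun j => mul_assoc _ _ _
    _ = ∑' i : ℕ, ENNReal.ofReal (ν i)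
          * ((ENNReal.ofReal (frGen q t)) ^ i - (ENNReal.ofReal (frGen q s)) ^ i) :=
        tsum_congr fun i => by rw [hinner i]
    _ = Del ν (ENNReal.ofReal (frGen q s)) (ENNReal.ofReal (frGen q t)) := rfl

end del

end BGW

open BGW in
theorem no_invariant_measure_below_m
    (q : ℕ → ℝ) (hq0 : ∀ k, 0 ≤ q k) (hq1 : HasSum q 1)
    (m : ℝ) (hm : HasSum (fun k : ℕ => (k : ℝ) * q k) m) (hm0 : 0 < m) (hm1 : m < 1)
    (lam : ℝ) (hlam0 : 0 < lam) (hlam : lam < m)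
    (ν : ℕ → ℝ) (hν : IsInvMeasure q lam ν) :
    ∀ j : ℕ, 1 ≤ j → ν j = 0 := by
  classical
  by_contra hcon
  push_neg at hcon
  obtain ⟨j₀, hj₀1, hj₀⟩ := hcon
  have hνj₀ : 0 < ν j₀ := lt_of_le_of_ne (hν.1 j₀) (Ne.symm hj₀)
  -- a productive offspring size
  obtain ⟨j₁, hj₁, hqj₁⟩ : ∃ k : ℕ, 1 ≤ k ∧ 0 < q k := by
    by_contra h
    push_neg at h
    have hz : ∀ k : ℕ, (k : ℝ) * q k = 0 := by
      intro k
      rcases Nat.eq_zero_or_pos k with rfl | hk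
      · simp
      · rw [le_antisymm (h k hk) (hq0 k), mul_zero]
    have h0 : HasSum (fun _ : ℕ => (0 : ℝ)) m := by
      have h1 := hm
      rw [show (fun k : ℕ => (k : ℝ) * q k) = fun _ : ℕ => (0 : ℝ) from funext hz] at h1
      exact h1
    exact absurd (h0.unique hasSum_zero) (ne_of_gt hm0)
  -- q 0 > 0
  have hq00 : 0 < q 0 := by
    have hsub : HasSum (fun k : ℕ => q k - (k : ℝ) * q k) (1 - m) := hq1.sub hm
    have hdecomp := hsub.tsum_eq
    rw [Summable.tsum_eq_zero_add hsub.summable] at hdecomp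
    have htail : ∑' k : ℕ, (q (k + 1) - ((k + 1 : ℕ) : ℝ) * q (k + 1)) ≤ 0 := by
      refine tsum_nonpos fun k => ?_
      have h1 : (1 : ℝ) ≤ ((k + 1 : ℕ) : ℝ) := by push_cast; linarith
      nlinarith [hq0 (k + 1)]
    push_cast at hdecomp htail
    nlinarith [htail, hdecomp]
  have hq01 : q 0 ≤ 1 := by
    have := Summable.le_tsum hq1.summable 0 (fun k _ => hq0 k)
    rwa [hq1.tsum_eq] at this
  -- the iterates of the generating function at 0
  set tseq : ℕ → ℝ := fun n => (frGen q)^[n] 0 with htseqdef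
  have htsucc : ∀ n, tseq (n + 1) = frGen q (tseq n) := fun n =>
    Function.iterate_succ_apply' _ _ _
  have ht0 : tseq 0 = 0 := rfl
  have hrange : ∀ n, 0 ≤ tseq n ∧ tseq n < 1 := by
    intro n
    induction n with
    | zero => norm_num [ht0]
    | succ n ih =>
        rw [htsucc]
        exact ⟨fr_nonneg hq0 ih.1, fr_lt_one hq0 hq1 hj₁ hqj₁ ih.1 ih.2⟩
  have hmono : ∀ n, tseq n ≤ tseq (n + 1) := by
    intro n
    induction n with
    | zero => rw [htsucc, ht0]; exact fr_nonneg hq0 le_rfl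
    | succ n ih =>
        have h := fr_mono hq0 hq1 (hrange n).1 ih (hrange (n + 1)).2.le
        rwa [← htsucc n, ← htsucc (n + 1)] at h
  have htseqmono : Monotone tseq := monotone_nat_of_le_succ hmono
  have honesub : ∀ n, 1 - tseq n ≤ m ^ n := by
    intro n
    induction n with
    | zero => rw [ht0, pow_zero]; norm_num
    | succ n ih =>
        rw [htsucc]
        have h1 := one_sub_fr_le hq0 hq1 hm (hrange n).1 (hrange n).2.le
        have h2 : m * (1 - tseq n) ≤ m * m ^ n := mul_le_mul_of_nonneg_left ih hm0.le
        calc 1 - frGen q (tseq n) ≤ m * (1 - tseq n) := h1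
          _ ≤ m * m ^ n := h2
          _ = m ^ (n + 1) := (pow_succ' m n).symm
  have htlim : Filter.Tendsto tseq Filter.atTop (nhds 1) := by
    have hup : ∀ n, tseq n ≤ 1 := fun n => (hrange n).2.le
    have hlo : ∀ n, 1 - m ^ n ≤ tseq n := fun n => by linarith [honesub n]
    have hpow : Filter.Tendsto (fun n : ℕ => 1 - m ^ n) Filter.atTop (nhds 1) := by
      have := tendsto_pow_atTop_nhds_zero_of_lt_one hm0.le hm1
      have := (tendsto_const_nhds (x := (1:ℝ)) (f := Filter.atTop)).sub this
      simpa using this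
    exact tendsto_of_tendsto_of_tendsto_of_le_of_le hpow tendsto_const_nhds hlo hup
  -- ENNReal quantities
  set L := ENNReal.ofReal lam with hLdef
  set G0 := Del ν 0 (ENNReal.ofReal (q 0)) with hG0def
  have hL1 : L < 1 := by
    rw [hLdef, ← ENNReal.ofReal_one]
    exact (ENNReal.ofReal_lt_ofReal_iff one_pos).mpr (by linarith)
  -- one-step iteration identities
  have hstep1 : ∀ n, Del ν (ENNReal.ofReal (tseq (n + 1))) 1
      = L * Del ν (ENNReal.ofReal (tseq n)) 1 := by
    intro n
    have hk := key_step (ν := ν) hq0 hq1 hlam0.le hν (hrange n).1 (hrange n).2.le le_rfl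
    rw [fr_one hq1, ENNReal.ofReal_one, ← htsucc] at hk
    exact hk.symm
  have hIter1 : ∀ n, Del ν (ENNReal.ofReal (tseq n)) 1 = L ^ n * Del ν 0 1 := by
    intro n
    induction n with
    | zero => rw [ht0, ENNReal.ofReal_zero, pow_zero, one_mul]
    | succ n ih => rw [hstep1 n, ih, pow_succ, mul_comm (L ^ n) L, mul_assoc]
  have hstep2 : ∀ n, Del ν (ENNReal.ofReal (tseq (n + 1))) (ENNReal.ofReal (tseq (n + 2)))
      = L * Del ν (ENNReal.ofReal (tseq n)) (ENNReal.ofReal (tseq (n + 1))) := by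
    intro n
    have hk := key_step (ν := ν) hq0 hq1 hlam0.le hν (hrange n).1 (hmono n) (hrange (n + 1)).2.le
    rw [← htsucc, ← htsucc] at hk
    exact hk.symm
  have hIter2 : ∀ n, Del ν (ENNReal.ofReal (tseq n)) (ENNReal.ofReal (tseq (n + 1)))
      = L ^ n * G0 := by
    intro n
    induction n with
    | zero =>
        rw [ht0, ENNReal.ofReal_zero, pow_zero, one_mul, hG0def]
        congr 1
        rw [htsucc, ht0, fr_zero]
    | succ n ih => rw [hstep2 n, ih, pow_succ, mul_comm (L ^ n) L, mul_assoc]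
  -- partial masses
  have hPart : ∀ N, Del ν 0 (ENNReal.ofReal (tseq N)) = ∑ n ∈ Finset.range N, L ^ n * G0 := by
    intro N
    induction N with
    | zero => rw [ht0, ENNReal.ofReal_zero, Del_self, Finset.range_zero, Finset.sum_empty]
    | succ N ih =>
        rw [Del_add (ν := ν) (zero_le) (ENNReal.ofReal_le_ofReal (hmono N)), ih,
          hIter2 N, Finset.sum_range_succ]
  -- G0 is finite
  have hG0fin : G0 ≠ ⊤ := by
    have hsum := nu_q0_summable hq0 hlam0 hν hj₁ hqj₁ hq00
    rw [hG0def, Del_zero_left hν.2.1]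
    have : ∑' j : ℕ, ENNReal.ofReal (ν j) * (ENNReal.ofReal (q 0)) ^ j
        = ENNReal.ofReal (∑' j : ℕ, ν j * q 0 ^ j) := by
      rw [ENNReal.ofReal_tsum_of_nonneg
        (fun j => mul_nonneg (hν.1 j) (pow_nonneg hq00.le j)) hsum]
      exact tsum_congr fun j => by
        rw [ENNReal.ofReal_mul (hν.1 j), ENNReal.ofReal_pow hq00.le]
    rw [this]
    exact ENNReal.ofReal_ne_top
  -- total mass is finite (monotone convergence)
  have hMfin : Del ν 0 1 ≠ ⊤ := by
    have hgN : ∀ N, Del ν 0 (ENNReal.ofReal (tseq N)) ≤ (1 - L)⁻¹ * G0 := by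
      intro N
      rw [hPart N]
      calc ∑ n ∈ Finset.range N, L ^ n * G0 ≤ ∑' n : ℕ, L ^ n * G0 :=
            ENNReal.sum_le_tsum _
        _ = (∑' n : ℕ, L ^ n) * G0 := ENNReal.tsum_mul_right
        _ = (1 - L)⁻¹ * G0 := by rw [ENNReal.tsum_geometric]
    have hsup : Del ν 0 1 = ⨆ N, Del ν 0 (ENNReal.ofReal (tseq N)) := by
      have hmeasf : ∀ N, Measurable
          (fun j : ℕ => ENNReal.ofReal (ν j) * (ENNReal.ofReal (tseq N)) ^ j) :=
        fun N => measurable_of_countable _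
      have hmonof : Monotone
          (fun N => fun j : ℕ => ENNReal.ofReal (ν j) * (ENNReal.ofReal (tseq N)) ^ j) := by
        intro a b hab j
        exact mul_le_mul_right
          (pow_le_pow_left' (ENNReal.ofReal_le_ofReal (htseqmono hab)) j) _
      have hsup1 : ∀ j : ℕ, (⨆ N, (ENNReal.ofReal (tseq N)) ^ j) = 1 := by
        intro j
        have hmono' : Monotone fun N => (ENNReal.ofReal (tseq N)) ^ j :=
          fun a b hab => pow_le_pow_left' (ENNReal.ofReal_le_ofReal (htseqmono hab)) j
        have h1 : Filter.Tendsto (fun N => (ENNReal.ofReal (tseq N)) ^ j)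
            Filter.atTop (nhds 1) := by
          have := ENNReal.Tendsto.pow (n := j) (ENNReal.tendsto_ofReal htlim)
          rwa [ENNReal.ofReal_one, one_pow] at this
        exact tendsto_nhds_unique (tendsto_atTop_iSup hmono') h1
      calc Del ν 0 1 = ∑' j : ℕ, ENNReal.ofReal (ν j) * 1 ^ j := Del_zero_left hν.2.1 1
        _ = ∑' j : ℕ, ⨆ N, ENNReal.ofReal (ν j) * (ENNReal.ofReal (tseq N)) ^ j := by
            refine tsum_congr fun j => ?_
            rw [← ENNReal.mul_iSup, hsup1 j, one_pow, mul_one]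
        _ = ⨆ N, ∑' j : ℕ, ENNReal.ofReal (ν j) * (ENNReal.ofReal (tseq N)) ^ j := by
            rw [← MeasureTheory.lintegral_count]
            rw [MeasureTheory.lintegral_iSup hmeasf hmonof]
            exact iSup_congr fun N => MeasureTheory.lintegral_count _
        _ = ⨆ N, Del ν 0 (ENNReal.ofReal (tseq N)) :=
            iSup_congr fun N => (Del_zero_left hν.2.1 _).symm
    rw [hsup]
    refine ne_top_of_le_ne_top ?_ (iSup_le hgN)
    exact ENNReal.mul_ne_top
      (ENNReal.inv_ne_top.mpr (by
        simp only [ne_eq, tsub_eq_zero_iff_le, not_le]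
        exact hL1)) hG0fin
  -- lower bound on the surviving mass
  have hlow : ∀ n, ENNReal.ofReal (ν j₀ * (1 - tseq n)) ≤ L ^ n * Del ν 0 1 := by
    intro n
    rw [← hIter1 n]
    have h1 : ENNReal.ofReal (ν j₀) * ((1 : ℝ≥0∞) ^ j₀ - (ENNReal.ofReal (tseq n)) ^ j₀)
        ≤ Del ν (ENNReal.ofReal (tseq n)) 1 := ENNReal.le_tsum j₀
    refine le_trans ?_ h1
    rw [one_pow, ENNReal.ofReal_mul (hν.1 j₀)]
    refine mul_le_mul_right ?_ _
    have h2 : (ENNReal.ofReal (tseq n)) ^ j₀ ≤ ENNReal.ofReal (tseq n) := by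
      have := pow_le_pow_right_of_le_one'
        (a := ENNReal.ofReal (tseq n))
        (by rw [← ENNReal.ofReal_one]; exact ENNReal.ofReal_le_ofReal (hrange n).2.le) hj₀1
      simpa using this
    calc ENNReal.ofReal (1 - tseq n) = 1 - ENNReal.ofReal (tseq n) := by
          rw [ENNReal.ofReal_sub 1 (hrange n).1, ENNReal.ofReal_one]
      _ ≤ 1 - (ENNReal.ofReal (tseq n)) ^ j₀ := tsub_le_tsub_left h2 1
  have hlowR : ∀ n, ν j₀ * (1 - tseq n) ≤ lam ^ n * (Del ν 0 1).toReal := by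
    intro n
    have hne : L ^ n * Del ν 0 1 ≠ ⊤ :=
      ENNReal.mul_ne_top (ENNReal.pow_ne_top ENNReal.ofReal_ne_top) hMfin
    have := ENNReal.toReal_mono hne (hlow n)
    rwa [ENNReal.toReal_ofReal
        (mul_nonneg hνj₀.le (by linarith [(hrange n).2])),
      ENNReal.toReal_mul, ENNReal.toReal_pow, hLdef, ENNReal.toReal_ofReal hlam0.le] at this
  -- growth rate of 1 - tseq n
  set θ := (lam + m) / 2 with hθdef
  have hθl : lam < θ := by rw [hθdef]; linarith
  have hθm : θ < m := by rw [hθdef]; linarith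
  have hθ0 : 0 < θ := by rw [hθdef]; linarith
  set θ₂ := (θ + m) / 2 with hθ₂def
  have hθ₂a : θ < θ₂ := by rw [hθ₂def]; linarith
  have hθ₂b : θ₂ < m := by rw [hθ₂def]; linarith
  have hθ₂0 : 0 < θ₂ := by linarith
  obtain ⟨K, hK⟩ : ∃ K : ℕ, θ₂ ≤ ∑ k ∈ Finset.range K, (k : ℝ) * q k := by
    have hev := (hm.tendsto_sum_nat).eventually_const_lt hθ₂b
    obtain ⟨K, hK⟩ := hev.exists
    exact ⟨K, hK.le⟩
  obtain ⟨N, hN⟩ : ∃ N : ℕ, ∀ n, N ≤ n → θ / θ₂ ≤ tseq n ^ K := by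
    have hpow : Filter.Tendsto (fun n => tseq n ^ K) Filter.atTop (nhds 1) := by
      have := htlim.pow K
      rwa [one_pow] at this
    have hlt : θ / θ₂ < 1 := (div_lt_one hθ₂0).mpr hθ₂a
    have hev := hpow.eventually_const_lt hlt
    rw [Filter.eventually_atTop] at hev
    obtain ⟨N, hN⟩ := hev
    exact ⟨N, fun n hn => (hN n hn).le⟩
  have hgrow : ∀ p : ℕ, θ ^ p * (1 - tseq N) ≤ 1 - tseq (N + p) := by
    intro p
    induction p with
    | zero => rw [pow_zero, one_mul, Nat.add_zero]
    | succ p ih =>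
        have ht := hrange (N + p)
        have hfr := one_sub_fr_ge hq0 hq1 K ht.1 ht.2.le
        have h6 : θ ≤ (∑ k ∈ Finset.range K, (k : ℝ) * q k) * tseq (N + p) ^ K := by
          calc θ = θ₂ * (θ / θ₂) := by field_simp
            _ ≤ (∑ k ∈ Finset.range K, (k : ℝ) * q k) * tseq (N + p) ^ K := by
                refine mul_le_mul hK (hN (N + p) (by omega))
                  (div_nonneg hθ0.le hθ₂0.le) (by linarith)
        have h5 : θ * (1 - tseq (N + p))
            ≤ (∑ k ∈ Finset.range K, (k : ℝ) * q k) * tseq (N + p) ^ K * (1 - tseq (N + p)) :=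
          mul_le_mul_of_nonneg_right h6 (by linarith [ht.2])
        have h7 : θ * (θ ^ p * (1 - tseq N)) ≤ θ * (1 - tseq (N + p)) :=
          mul_le_mul_of_nonneg_left ih hθ0.le
        rw [show N + (p + 1) = (N + p) + 1 by omega, htsucc]
        calc θ ^ (p + 1) * (1 - tseq N) = θ * (θ ^ p * (1 - tseq N)) := by ring
          _ ≤ θ * (1 - tseq (N + p)) := h7
          _ ≤ (∑ k ∈ Finset.range K, (k : ℝ) * q k) * tseq (N + p) ^ K
              * (1 - tseq (N + p)) := h5
          _ ≤ 1 - frGen q (tseq (N + p)) := hfr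
  -- final contradiction
  have hcN : 0 < 1 - tseq N := by linarith [(hrange N).2]
  have hfinal : ∀ p : ℕ, (θ / lam) ^ p
      ≤ lam ^ N * (Del ν 0 1).toReal / (ν j₀ * (1 - tseq N)) := by
    intro p
    have h7 := hlowR (N + p)
    have h8 := hgrow p
    have h9 : ν j₀ * (θ ^ p * (1 - tseq N)) ≤ lam ^ N * lam ^ p * (Del ν 0 1).toReal := by
      calc ν j₀ * (θ ^ p * (1 - tseq N)) ≤ ν j₀ * (1 - tseq (N + p)) :=
            mul_le_mul_of_nonneg_left h8 hνj₀.le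
        _ ≤ lam ^ (N + p) * (Del ν 0 1).toReal := h7
        _ = lam ^ N * lam ^ p * (Del ν 0 1).toReal := by rw [pow_add]
    rw [div_pow, div_le_div_iff₀ (by positivity) (by positivity)]
    nlinarith [h9]
  obtain ⟨p, hp⟩ := pow_unbounded_of_one_lt
    (lam ^ N * (Del ν 0 1).toReal / (ν j₀ * (1 - tseq N)))
    ((one_lt_div hlam0).mpr hθl)
  exact absurd (hfinal p) (not_le.mpr hp)
end

section
/- Let λ > 0 and let ν be a nontrivial λ-invariant measure of the subcritical BGW process killed at 0. Then ν is a finite measure (i.e. ∑_{n≥1} ν(n) < ∞) if and only if λ < 1. -/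
open MeasureTheory Real Set

lemma convPow_zero' (q : ℕ → ℝ) (j : ℕ) : convPow q 0 j = if j = 0 then 1 else 0 := rfl

lemma convPow_succ' (q : ℕ → ℝ) (i j : ℕ) :
    convPow q (i + 1) j = ∑ k ∈ Finset.range (j + 1), convPow q i (j - k) * q k := rfl

lemma convPow_nonneg (q : ℕ → ℝ) (hq0 : ∀ k, 0 ≤ q k) : ∀ i j, 0 ≤ convPow q i j := by
  intro i
  induction i with
  | zero => intro j; rw [convPow_zero']; split <;> norm_num
  | succ i ih =>
    intro j; rw [convPow_succ']
    exact Finset.sum_nonneg fun k _ => mul_nonneg (ih _) (hq0 k)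

lemma convPow_apply_zero (q : ℕ → ℝ) : ∀ i, convPow q i 0 = q 0 ^ i := by
  intro i
  induction i with
  | zero => simp [convPow_zero']
  | succ i ih => rw [convPow_succ']; simp [ih, pow_succ]

lemma convPow_one' (q : ℕ → ℝ) (j : ℕ) : convPow q 1 j = q j := by
  rw [convPow_succ']
  rw [Finset.sum_eq_single j]
  · simp [convPow_zero']
  · intro k hk hkj
    have hk' : k < j := lt_of_le_of_ne (Nat.lt_succ_iff.mp (Finset.mem_range.mp hk)) hkj
    rw [convPow_zero']
    have : j - k ≠ 0 := by omega
    simp [this]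
  · intro h; exact absurd (Finset.self_mem_range_succ j) h

lemma convPow_succ_lower (q : ℕ → ℝ) (hq0 : ∀ k, 0 ≤ q k) (i j : ℕ) :
    convPow q i j * q 0 ≤ convPow q (i + 1) j := by
  rw [convPow_succ']
  have h0 : (0 : ℕ) ∈ Finset.range (j + 1) := Finset.mem_range.mpr (Nat.succ_pos j)
  have := Finset.single_le_sum (f := fun k => convPow q i (j - k) * q k)
    (fun k _ => mul_nonneg (convPow_nonneg q hq0 i _) (hq0 k)) h0
  simpa using this

lemma convPow_lower (q : ℕ → ℝ) (hq0 : ∀ k, 0 ≤ q k) (j : ℕ) :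
    ∀ i, q 0 ^ i * q j ≤ convPow q (i + 1) j := by
  intro i
  induction i with
  | zero => simp [convPow_one' q j]
  | succ i ih =>
    calc q 0 ^ (i + 1) * q j = q 0 ^ i * q j * q 0 := by ring
    _ ≤ convPow q (i + 1) j * q 0 := by
        exact mul_le_mul_of_nonneg_right ih (hq0 0)
    _ ≤ convPow q (i + 2) j := convPow_succ_lower q hq0 (i + 1) j

/-- generating function of the `i`-fold convolution power -/
lemma hasSum_convPow_gf (q : ℕ → ℝ) (hq0 : ∀ k, 0 ≤ q k) (hq : Summable q)
    {s : ℝ} (hs0 : 0 ≤ s) (hs1 : s ≤ 1) :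
    ∀ i, HasSum (fun j => convPow q i j * s ^ j) ((∑' k, q k * s ^ k) ^ i) := by
  have hqs : Summable (fun k => q k * s ^ k) := by
    refine Summable.of_nonneg_of_le (fun k => mul_nonneg (hq0 k) (pow_nonneg hs0 k))
      (fun k => ?_) hq
    calc q k * s ^ k ≤ q k * 1 := by
          exact mul_le_mul_of_nonneg_left (pow_le_one₀ hs0 hs1) (hq0 k)
    _ = q k := mul_one _
  intro i
  induction i with
  | zero =>
    have : (fun j => convPow q 0 j * s ^ j) = fun j => if j = 0 then 1 else 0 := by
      funext j
      rw [convPow_zero']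
      by_cases h : j = 0 <;> simp [h]
    rw [this, pow_zero]
    exact hasSum_ite_eq 0 (1 : ℝ)
  | succ i ih =>
    have hnf : (fun k => ‖q k * s ^ k‖) = fun k => q k * s ^ k := by
      funext k; exact Real.norm_of_nonneg (mul_nonneg (hq0 k) (pow_nonneg hs0 k))
    have hng : (fun j => ‖convPow q i j * s ^ j‖) = fun j => convPow q i j * s ^ j := by
      funext j
      exact Real.norm_of_nonneg (mul_nonneg (convPow_nonneg q hq0 i j) (pow_nonneg hs0 j))
    have hc := hasSum_sum_range_mul_of_summable_norm
      (f := fun k => q k * s ^ k) (g := fun j => convPow q i j * s ^ j)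
      (by rw [hnf]; exact hqs) (by rw [hng]; exact ih.summable)
    rw [ih.tsum_eq] at hc
    have heq : (fun n => ∑ k ∈ Finset.range (n + 1),
        (q k * s ^ k) * (convPow q i (n - k) * s ^ (n - k)))
        = fun n => convPow q (i + 1) n * s ^ n := by
      funext n
      rw [convPow_succ', Finset.sum_mul]
      refine Finset.sum_congr rfl fun k hk => ?_
      have hk' : k ≤ n := Nat.lt_succ_iff.mp (Finset.mem_range.mp hk)
      have : s ^ k * s ^ (n - k) = s ^ n := by
        rw [← pow_add, Nat.add_sub_cancel' hk']
      calc (q k * s ^ k) * (convPow q i (n - k) * s ^ (n - k))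
          = convPow q i (n - k) * q k * (s ^ k * s ^ (n - k)) := by ring
      _ = convPow q i (n - k) * q k * s ^ n := by rw [this]
    rw [heq] at hc
    rw [pow_succ']
    exact hc

lemma summable_and_tsum_of_ofReal {f : ℕ → ℝ} {c : ℝ} (h0 : ∀ i, 0 ≤ f i) (hc : 0 ≤ c)
    (h : ∑' i, ENNReal.ofReal (f i) = ENNReal.ofReal c) : Summable f ∧ ∑' i, f i = c := by
  have hne : ∑' i, ENNReal.ofReal (f i) ≠ ⊤ := by rw [h]; exact ENNReal.ofReal_ne_top
  have hsum : Summable f := by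
    have h2 := ENNReal.summable_toReal hne
    have : (fun i => (ENNReal.ofReal (f i)).toReal) = f := by
      funext i; exact ENNReal.toReal_ofReal (h0 i)
    rwa [this] at h2
  refine ⟨hsum, ?_⟩
  rw [← ENNReal.ofReal_tsum_of_nonneg h0 hsum] at h
  exact (ENNReal.ofReal_eq_ofReal_iff (tsum_nonneg h0) hc).mp h

/-- Key functional equation: if `V(s) = ∑ ν i s^i` converges then
`V(F s) = lam * V s + V(q 0)` where `F` is the offspring generating function. -/
lemma invariant_gf (q : ℕ → ℝ) (hq0 : ∀ k, 0 ≤ q k) (hq1 : HasSum q 1)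
    (lam : ℝ) (hlam : 0 < lam) (ν : ℕ → ℝ) (hν : IsInvMeasure q lam ν)
    {s : ℝ} (hs0 : 0 ≤ s) (hs1 : s ≤ 1)
    (hsum : Summable (fun i => ν i * s ^ i))
    (hq0sum : Summable (fun i => ν i * q 0 ^ i)) :
    Summable (fun i => ν i * (∑' k, q k * s ^ k) ^ i) ∧
      ∑' i, ν i * (∑' k, q k * s ^ k) ^ i
        = lam * (∑' i, ν i * s ^ i) + ∑' i, ν i * q 0 ^ i := by
  obtain ⟨hν0, hν00, hinv⟩ := hν
  have hq : Summable q := hq1.summable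
  have hqs : Summable (fun k => q k * s ^ k) := by
    refine Summable.of_nonneg_of_le (fun k => mul_nonneg (hq0 k) (pow_nonneg hs0 k))
      (fun k => ?_) hq
    calc q k * s ^ k ≤ q k * 1 :=
          mul_le_mul_of_nonneg_left (pow_le_one₀ hs0 hs1) (hq0 k)
    _ = q k := mul_one _
  set F : ℝ := ∑' k, q k * s ^ k with hF
  have hF0 : 0 ≤ F := tsum_nonneg fun k => mul_nonneg (hq0 k) (pow_nonneg hs0 k)
  have hFq0 : q 0 ≤ F := by
    have := Summable.le_tsum hqs 0 (fun k _ => mul_nonneg (hq0 k) (pow_nonneg hs0 k))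
    simpa using this
  -- the double family
  set G : ℕ → ℕ → ENNReal :=
    fun i j => ENNReal.ofReal (ν i * (convPow q i (j + 1) * s ^ (j + 1))) with hG
  -- column sums
  have hcol : ∀ j : ℕ, ∑' i, G i j = ENNReal.ofReal (lam * ν (j + 1) * s ^ (j + 1)) := by
    intro j
    obtain ⟨hsj, htj⟩ := hinv (j + 1) (Nat.succ_le_succ (Nat.zero_le j))
    have h1 : Summable (fun i => ν i * (convPow q i (j + 1) * s ^ (j + 1))) := by
      have := hsj.mul_right (s ^ (j + 1))
      simpa [mul_assoc] using this
    have h2 : ∑' i, ν i * (convPow q i (j + 1) * s ^ (j + 1))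
        = lam * ν (j + 1) * s ^ (j + 1) := by
      have : ∑' i, ν i * convPow q i (j + 1) * s ^ (j + 1)
          = (∑' i, ν i * convPow q i (j + 1)) * s ^ (j + 1) := tsum_mul_right
      rw [htj] at this
      simpa [mul_assoc] using this
    rw [hG, ← ENNReal.ofReal_tsum_of_nonneg
      (fun i => mul_nonneg (hν0 i) (mul_nonneg (convPow_nonneg q hq0 _ _) (pow_nonneg hs0 _)))
      h1, h2]
  -- row sums
  have hrow : ∀ i : ℕ, ∑' j, G i j = ENNReal.ofReal (ν i * (F ^ i - q 0 ^ i)) := by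
    intro i
    have hgf := hasSum_convPow_gf q hq0 hq hs0 hs1 i
    have h1 : HasSum (fun j => convPow q i (j + 1) * s ^ (j + 1)) (F ^ i - q 0 ^ i) := by
      have := (hasSum_nat_add_iff' (f := fun j => convPow q i j * s ^ j) 1
        (g := F ^ i)).mpr hgf
      simpa [convPow_apply_zero] using this
    have h2 : HasSum (fun j => ν i * (convPow q i (j + 1) * s ^ (j + 1)))
        (ν i * (F ^ i - q 0 ^ i)) := h1.mul_left (ν i)
    rw [hG, ← ENNReal.ofReal_tsum_of_nonneg
      (fun j => mul_nonneg (hν0 i) (mul_nonneg (convPow_nonneg q hq0 _ _) (pow_nonneg hs0 _)))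
      h2.summable, h2.tsum_eq]
  -- double sum two ways
  have hswap : ∑' (i : ℕ) (j : ℕ), G i j = ∑' (j : ℕ) (i : ℕ), G i j := ENNReal.tsum_comm
  -- total via columns
  have hVs0 : 0 ≤ ∑' i, ν i * s ^ i :=
    tsum_nonneg fun i => mul_nonneg (hν0 i) (pow_nonneg hs0 i)
  have hsum1 : Summable (fun j : ℕ => lam * ν (j + 1) * s ^ (j + 1)) := by
    have h3 : Summable (fun j : ℕ => ν (j + 1) * s ^ (j + 1)) :=
      (summable_nat_add_iff (f := fun i => ν i * s ^ i) 1).mpr hsum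
    have := h3.mul_left lam
    simpa [mul_assoc] using this
  have htot1 : ∑' (j : ℕ) (i : ℕ), G i j = ENNReal.ofReal (lam * ∑' i, ν i * s ^ i) := by
    have he : ∀ j : ℕ, (fun j => ∑' i, G i j) j
        = (fun j => ENNReal.ofReal (lam * ν (j + 1) * s ^ (j + 1))) j := hcol
    rw [tsum_congr he, ← ENNReal.ofReal_tsum_of_nonneg
      (fun j => mul_nonneg (mul_nonneg hlam.le (hν0 _)) (pow_nonneg hs0 _)) hsum1]
    congr 1
    have h3 : Summable (fun j : ℕ => ν (j + 1) * s ^ (j + 1)) :=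
      (summable_nat_add_iff (f := fun i => ν i * s ^ i) 1).mpr hsum
    calc ∑' j : ℕ, lam * ν (j + 1) * s ^ (j + 1)
        = ∑' j : ℕ, lam * (ν (j + 1) * s ^ (j + 1)) := by
          refine tsum_congr fun j => by ring
      _ = lam * ∑' j : ℕ, ν (j + 1) * s ^ (j + 1) := by rw [tsum_mul_left]
      _ = lam * ∑' i, ν i * s ^ i := by
          congr 1
          rw [Summable.tsum_eq_zero_add hsum, hν00]
          simp
  -- total via rows
  have hpow_le : ∀ i : ℕ, q 0 ^ i ≤ F ^ i := fun i => pow_le_pow_left₀ (hq0 0) hFq0 i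
  have hrownn : ∀ i, 0 ≤ ν i * (F ^ i - q 0 ^ i) :=
    fun i => mul_nonneg (hν0 i) (sub_nonneg.mpr (hpow_le i))
  have htot2 : ∑' (i : ℕ) (j : ℕ), G i j
      = ∑' i : ℕ, ENNReal.ofReal (ν i * (F ^ i - q 0 ^ i)) := tsum_congr hrow
  -- combine
  have hkey : ∑' i : ℕ, ENNReal.ofReal (ν i * (F ^ i - q 0 ^ i))
      = ENNReal.ofReal (lam * ∑' i, ν i * s ^ i) := by
    rw [← htot2, hswap, htot1]
  have hadd : ∑' i : ℕ, ENNReal.ofReal (ν i * F ^ i)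
      = ENNReal.ofReal (lam * (∑' i, ν i * s ^ i) + ∑' i, ν i * q 0 ^ i) := by
    have hterm : ∀ i : ℕ, ENNReal.ofReal (ν i * F ^ i)
        = ENNReal.ofReal (ν i * (F ^ i - q 0 ^ i)) + ENNReal.ofReal (ν i * q 0 ^ i) := by
      intro i
      rw [← ENNReal.ofReal_add (hrownn i)
        (mul_nonneg (hν0 i) (pow_nonneg (hq0 0) i))]
      congr 1
      ring
    rw [tsum_congr hterm, ENNReal.tsum_add, hkey,
      ← ENNReal.ofReal_tsum_of_nonneg (fun i => mul_nonneg (hν0 i) (pow_nonneg (hq0 0) i))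
        hq0sum,
      ← ENNReal.ofReal_add (mul_nonneg hlam.le hVs0)
        (tsum_nonneg fun i => mul_nonneg (hν0 i) (pow_nonneg (hq0 0) i))]
  exact summable_and_tsum_of_ofReal
    (fun i => mul_nonneg (hν0 i) (pow_nonneg hF0 i))
    (add_nonneg (mul_nonneg hlam.le hVs0)
      (tsum_nonneg fun i => mul_nonneg (hν0 i) (pow_nonneg (hq0 0) i)))
    hadd

theorem invariant_measure_finite_iff_eigenvalue_lt_one
    (q : ℕ → ℝ) (hq0 : ∀ k, 0 ≤ q k) (hq1 : HasSum q 1)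
    (m : ℝ) (hm : HasSum (fun k : ℕ => (k : ℝ) * q k) m) (hm0 : 0 < m) (hm1 : m < 1)
    (lam : ℝ) (hlam : 0 < lam)
    (ν : ℕ → ℝ) (hν : IsInvMeasure q lam ν) (hnt : ∃ j, 0 < ν j) :
    Summable ν ↔ lam < 1 := by
  obtain ⟨hν0, hν00, hinv⟩ := hν
  have hq : Summable q := hq1.summable
  -- q 0 ≥ 1 - m > 0
  have hq0pos : 0 < q 0 := by
    have hle : ∀ k : ℕ, q k ≤ (k : ℝ) * q k + (if k = 0 then q 0 else 0) := by
      intro k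
      cases k with
      | zero => simp
      | succ n =>
        simp only [if_neg (Nat.succ_ne_zero n), add_zero]
        have : (1 : ℝ) ≤ (n + 1 : ℕ) := by exact_mod_cast Nat.succ_le_succ (Nat.zero_le n)
        nlinarith [hq0 (n + 1)]
    have hsum2 : HasSum (fun k : ℕ => (k : ℝ) * q k + (if k = 0 then q 0 else 0)) (m + q 0) :=
      hm.add (hasSum_ite_eq 0 (q 0))
    have h1 : (1 : ℝ) ≤ m + q 0 := by
      rw [← hq1.tsum_eq, ← hsum2.tsum_eq]
      exact Summable.tsum_le_tsum hle hq1.summable hsum2.summable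
    linarith
  have hq0le1 : q 0 ≤ 1 := by
    have := Summable.le_tsum hq 0 (fun k _ => hq0 k)
    rwa [hq1.tsum_eq] at this
  -- existence of j0 ≥ 1 with q j0 > 0
  obtain ⟨j0, hj01, hqj0⟩ : ∃ j : ℕ, 1 ≤ j ∧ 0 < q j := by
    by_contra h
    push_neg at h
    have hz : (fun k : ℕ => (k : ℝ) * q k) = fun _ => (0 : ℝ) := by
      funext k
      cases k with
      | zero => simp
      | succ n =>
        have := le_antisymm (h (n + 1) (Nat.succ_le_succ (Nat.zero_le n))) (hq0 (n + 1))
        simp [this]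
    rw [hz] at hm
    have := hm.unique hasSum_zero
    linarith
  -- Summable (fun i => ν i * q 0 ^ i)
  have hq0sum : Summable (fun i => ν i * q 0 ^ i) := by
    obtain ⟨hsj0, _⟩ := hinv j0 hj01
    have hcmp : ∀ i : ℕ, ν i * q 0 ^ i * q j0 ≤ ν i * convPow q i j0 * q 0 := by
      intro i
      cases i with
      | zero => simp [hν00]
      | succ n =>
        have h1 : q 0 ^ n * q j0 ≤ convPow q (n + 1) j0 := convPow_lower q hq0 j0 n
        have h2 : ν (n + 1) * (q 0 ^ n * q j0) * q 0 ≤ ν (n + 1) * convPow q (n + 1) j0 * q 0 := by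
          have := mul_le_mul_of_nonneg_left h1 (hν0 (n + 1))
          exact mul_le_mul_of_nonneg_right this (hq0 0)
        calc ν (n + 1) * q 0 ^ (n + 1) * q j0
            = ν (n + 1) * (q 0 ^ n * q j0) * q 0 := by ring
        _ ≤ _ := h2
    have hs1 : Summable (fun i => ν i * convPow q i j0 * q 0) := hsj0.mul_right (q 0)
    have hs2 : Summable (fun i => ν i * q 0 ^ i * q j0) :=
      Summable.of_nonneg_of_le
        (fun i => mul_nonneg (mul_nonneg (hν0 i) (pow_nonneg hq0pos.le i)) hqj0.le)
        hcmp hs1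
    exact (summable_mul_right_iff hqj0.ne').mp hs2
  have hF1 : (∑' k, q k * (1 : ℝ) ^ k) = 1 := by
    simpa using hq1.tsum_eq
  constructor
  · -- Summable ν → lam < 1
    intro hνsum
    have hsum1 : Summable (fun i => ν i * (1 : ℝ) ^ i) := by simpa using hνsum
    obtain ⟨_, heq⟩ := invariant_gf q hq0 hq1 lam hlam ν ⟨hν0, hν00, hinv⟩
      zero_le_one le_rfl hsum1 hq0sum
    rw [hF1] at heq
    simp only [one_pow, mul_one] at heq
    -- heq : ∑' i, ν i = lam * ∑' i, ν i + ∑' i, ν i * q 0 ^ i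
    obtain ⟨j, hj⟩ := hnt
    have hT : 0 < ∑' i, ν i := by
      have := Summable.le_tsum hνsum j (fun k _ => hν0 k)
      linarith
    have hD : 0 < ∑' i, ν i * q 0 ^ i := by
      have h1 : 0 < ν j * q 0 ^ j := mul_pos hj (pow_pos hq0pos j)
      have := Summable.le_tsum hq0sum j (fun k _ => mul_nonneg (hν0 k) (pow_nonneg hq0pos.le k))
      linarith
    have hlt : lam * ∑' i, ν i < 1 * ∑' i, ν i := by
      rw [one_mul]; linarith
    exact lt_of_mul_lt_mul_right hlt hT.le
  · -- lam < 1 → Summable ν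
    intro hlam1
    set Vq0 : ℝ := ∑' i, ν i * q 0 ^ i with hVq0def
    have hVq0nn : 0 ≤ Vq0 :=
      tsum_nonneg fun i => mul_nonneg (hν0 i) (pow_nonneg hq0pos.le i)
    set B : ℝ := Vq0 / (1 - lam) with hBdef
    have hBnn : 0 ≤ B := div_nonneg hVq0nn (by linarith)
    have hVq0B : Vq0 = (1 - lam) * B := by
      rw [hBdef, mul_div_cancel₀]
      linarith
    -- iterates of the generating function
    set F : ℝ → ℝ := fun s => ∑' k, q k * s ^ k with hFdef
    set t : ℕ → ℝ := fun n => F^[n] (q 0) with htdef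
    have ht0 : t 0 = q 0 := rfl
    have htsucc : ∀ n, t (n + 1) = F (t n) := by
      intro n
      rw [htdef]
      exact Function.iterate_succ_apply' F n (q 0)
    -- properties of F on [0,1]
    have hFprop : ∀ s : ℝ, 0 ≤ s → s ≤ 1 →
        q 0 ≤ F s ∧ F s ≤ 1 ∧ 1 - F s ≤ m * (1 - s) := by
      intro s hs0 hs1
      have hqs : Summable (fun k => q k * s ^ k) := by
        refine Summable.of_nonneg_of_le (fun k => mul_nonneg (hq0 k) (pow_nonneg hs0 k))
          (fun k => ?_) hq
        calc q k * s ^ k ≤ q k * 1 :=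
              mul_le_mul_of_nonneg_left (pow_le_one₀ hs0 hs1) (hq0 k)
        _ = q k := mul_one _
      refine ⟨?_, ?_, ?_⟩
      · have := Summable.le_tsum hqs 0 (fun k _ => mul_nonneg (hq0 k) (pow_nonneg hs0 k))
        simpa using this
      · have h1 : ∀ k : ℕ, q k * s ^ k ≤ q k := fun k => by
          calc q k * s ^ k ≤ q k * 1 :=
                mul_le_mul_of_nonneg_left (pow_le_one₀ hs0 hs1) (hq0 k)
          _ = q k := mul_one _
        have := Summable.tsum_le_tsum h1 hqs hq
        rw [hq1.tsum_eq] at this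
        exact this
      · have hsub : HasSum (fun k => q k - q k * s ^ k) (1 - F s) :=
          hq1.sub hqs.hasSum
        have hle : ∀ k : ℕ, q k - q k * s ^ k ≤ (k : ℝ) * q k * (1 - s) := by
          intro k
          have hb : 1 + (k : ℝ) * (s - 1) ≤ s ^ k := one_add_mul_sub_le_pow (by linarith) k
          have h2 : 1 - s ^ k ≤ (k : ℝ) * (1 - s) := by nlinarith
          have h3 : q k * (1 - s ^ k) ≤ q k * ((k : ℝ) * (1 - s)) :=
            mul_le_mul_of_nonneg_left h2 (hq0 k)
          nlinarith [hq0 k]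
        have hrs : Summable (fun k : ℕ => (k : ℝ) * q k * (1 - s)) :=
          hm.summable.mul_right _
        have := Summable.tsum_le_tsum hle hsub.summable hrs
        rw [hsub.tsum_eq, (hm.mul_right (1 - s)).tsum_eq] at this
        exact this
    -- the induction
    have hmain : ∀ n : ℕ, (q 0 ≤ t n ∧ t n ≤ 1) ∧ 1 - t n ≤ m ^ n * (1 - q 0) ∧
        Summable (fun i => ν i * t n ^ i) ∧ ∑' i, ν i * t n ^ i ≤ B := by
      intro n
      induction n with
      | zero =>
        refine ⟨⟨le_refl _, hq0le1⟩, ?_, hq0sum, ?_⟩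
        · rw [pow_zero, one_mul, ht0]
        · show Vq0 ≤ B
          rw [hVq0B]
          nlinarith
      | succ n ih =>
        obtain ⟨⟨hl, hu⟩, hgap, hsumn, hVn⟩ := ih
        have ht0n : 0 ≤ t n := le_trans hq0pos.le hl
        obtain ⟨hFl, hFu, hFgap⟩ := hFprop (t n) ht0n hu
        obtain ⟨hsum', heq'⟩ := invariant_gf q hq0 hq1 lam hlam ν ⟨hν0, hν00, hinv⟩
          ht0n hu hsumn hq0sum
        refine ⟨⟨by rw [htsucc]; exact hFl, by rw [htsucc]; exact hFu⟩, ?_, ?_, ?_⟩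
        · rw [htsucc]
          calc 1 - F (t n) ≤ m * (1 - t n) := hFgap
          _ ≤ m * (m ^ n * (1 - q 0)) := mul_le_mul_of_nonneg_left hgap hm0.le
          _ = m ^ (n + 1) * (1 - q 0) := by ring
        · rw [htsucc]; exact hsum'
        · rw [htsucc]
          calc ∑' i, ν i * F (t n) ^ i
              = lam * (∑' i, ν i * t n ^ i) + Vq0 := heq'
          _ ≤ lam * B + Vq0 := by
              have := mul_le_mul_of_nonneg_left hVn hlam.le
              linarith
          _ = lam * B + (1 - lam) * B := by rw [hVq0B]
          _ = B := by ring
    -- conclusion: partial sums bounded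
    refine summable_of_sum_range_le (c := 2 * B) hν0 ?_
    intro N
    -- choose n with N * (m^n * (1 - q 0)) ≤ 1/2
    have htend : Filter.Tendsto (fun n : ℕ => (N : ℝ) * (m ^ n * (1 - q 0))) Filter.atTop (nhds 0) := by
      have h1 : Filter.Tendsto (fun n : ℕ => m ^ n) Filter.atTop (nhds 0) :=
        tendsto_pow_atTop_nhds_zero_of_lt_one hm0.le hm1
      have h2 := (h1.mul_const (1 - q 0)).const_mul (N : ℝ)
      simpa using h2
    obtain ⟨n, hn⟩ : ∃ n : ℕ, (N : ℝ) * (m ^ n * (1 - q 0)) ≤ 1 / 2 := by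
      have := htend.eventually (eventually_le_nhds (by norm_num : (0:ℝ) < 1/2))
      exact this.exists
    obtain ⟨⟨hl, hu⟩, hgap, hsumn, hVn⟩ := hmain n
    have ht0n : 0 ≤ t n := le_trans hq0pos.le hl
    have hpow : (1 : ℝ) / 2 ≤ t n ^ N := by
      have hb : 1 + (N : ℝ) * (t n - 1) ≤ t n ^ N :=
        one_add_mul_sub_le_pow (by linarith) N
      have h2 : (N : ℝ) * (1 - t n) ≤ (N : ℝ) * (m ^ n * (1 - q 0)) :=
        mul_le_mul_of_nonneg_left hgap (Nat.cast_nonneg N)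
      nlinarith
    have hps : (∑ i ∈ Finset.range N, ν i) * t n ^ N ≤ B := by
      calc (∑ i ∈ Finset.range N, ν i) * t n ^ N
          = ∑ i ∈ Finset.range N, ν i * t n ^ N := by rw [Finset.sum_mul]
      _ ≤ ∑ i ∈ Finset.range N, ν i * t n ^ i := by
          refine Finset.sum_le_sum fun i hi => ?_
          have hiN : i ≤ N := (Finset.mem_range.mp hi).le
          exact mul_le_mul_of_nonneg_left (pow_le_pow_of_le_one ht0n hu hiN) (hν0 i)
      _ ≤ ∑' i, ν i * t n ^ i := by
          refine Summable.sum_le_tsum _ (fun i _ => mul_nonneg (hν0 i) (pow_nonneg ht0n i)) hsumn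
      _ ≤ B := hVn
    nlinarith [Finset.sum_nonneg (fun i (_ : i ∈ Finset.range N) => hν0 i)]
end

section
/- For every a ∈ (0,1) and every α < 1 with α ≠ 0, the integral ∫₀^∞ (e^{−a·x} − e^{−x})·x^{−α−1} dx converges and equals Γ(−α)·(a^α − 1), where Γ denotes the real Gamma function (extended to negative non-integer arguments). -/
open MeasureTheory Real Set

theorem gamma_frullani_integral
    (a : ℝ) (ha : a ∈ Set.Ioo (0 : ℝ) 1) (α : ℝ) (hα : α < 1) (hα0 : α ≠ 0) :
    IntegrableOn (fun x => (Real.exp (-(a * x)) - Real.exp (-x)) * x ^ (-α - 1))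
      (Set.Ioi 0) volume ∧
    ∫ x in Set.Ioi (0 : ℝ), (Real.exp (-(a * x)) - Real.exp (-x)) * x ^ (-α - 1) =
      Real.Gamma (-α) * (a ^ α - 1) := by
  obtain ⟨ha0, ha1⟩ := ha
  set μ : Measure ℝ := volume.restrict (Ioi 0)
  set ν : Measure ℝ := volume.restrict (Ioc a 1)
  set f : ℝ × ℝ → ℝ := fun p => p.1 ^ (-α) * Real.exp (-(p.2 * p.1)) with hf
  have hmeas : AEStronglyMeasurable f (μ.prod ν) := by
    apply Measurable.aestronglyMeasurable
    exact ((measurable_fst.pow_const _).mul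
      ((measurable_snd.mul measurable_fst).neg.exp))
  -- inner t-integral for fixed x > 0
  have hinner : ∀ x : ℝ, 0 < x →
      ∫ t, f (x, t) ∂ν = (Real.exp (-(a * x)) - Real.exp (-x)) * x ^ (-α - 1) := by
    intro x hx
    have hderiv : ∀ t ∈ Set.uIcc a 1, HasDerivAt (fun t : ℝ => -Real.exp (-(t * x)) / x)
        (Real.exp (-(t * x))) t := by
      intro t _
      have h1 : HasDerivAt (fun t : ℝ => -(t * x)) (-x) t := by
        have h0 := ((hasDerivAt_id t).mul_const x).neg
        simp only [one_mul] at h0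
        exact h0
      have h2 : HasDerivAt (fun t : ℝ => -Real.exp (-(t * x)) / x)
          (-(Real.exp (-(t * x)) * -x) / x) t := (h1.exp).neg.div_const x
      convert h2 using 1
      field_simp [hx.ne']
    have hint : ∫ t in a..1, Real.exp (-(t * x)) =
        (Real.exp (-(a * x)) - Real.exp (-x)) / x := by
      rw [intervalIntegral.integral_eq_sub_of_hasDerivAt hderiv
        (by apply Continuous.intervalIntegrable; continuity)]
      field_simp
      ring
    have : ∫ t, f (x, t) ∂ν = x ^ (-α) * ∫ t in a..1, Real.exp (-(t * x)) := by
      rw [intervalIntegral.integral_of_le ha1.le, ← integral_const_mul]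
    rw [this, hint]
    rw [show -α - 1 = -α + (-1) by ring, Real.rpow_add hx, Real.rpow_neg_one]
    ring
  -- inner x-integral for fixed t > 0
  have houter : ∀ t : ℝ, 0 < t →
      ∫ x, f (x, t) ∂μ = t ^ (α - 1) * Real.Gamma (1 - α) := by
    intro t ht
    have := integral_rpow_mul_exp_neg_mul_Ioi (a := 1 - α) (r := t) (by linarith) ht
    simp only [show (1 : ℝ) - α - 1 = -α by ring] at this
    rw [show (∫ x, f (x, t) ∂μ) = ∫ x in Ioi (0:ℝ), x ^ (-α) * Real.exp (-(t * x)) from rfl,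
      this, one_div, Real.inv_rpow ht.le, ← Real.rpow_neg ht.le,
      show -(1 - α) = α - 1 by ring]
  -- integrability in x for fixed t > 0
  have hIntx : ∀ t : ℝ, 0 < t → Integrable (fun x => f (x, t)) μ := by
    intro t ht
    have := integrableOn_rpow_mul_exp_neg_mul_rpow (s := -α) (p := 1) (b := t)
      (by linarith) one_pos ht
    apply this.congr_fun ?_ measurableSet_Ioi
    intro x _
    simp [Real.rpow_one, neg_mul]
    rfl
  -- Tonelli: f is integrable on the product
  have hprod : Integrable f (μ.prod ν) := by
    rw [integrable_prod_iff' hmeas]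
    constructor
    · refine (ae_restrict_iff' measurableSet_Ioc).2 (Filter.Eventually.of_forall ?_)
      intro t ht
      exact hIntx t (ha0.trans ht.1)
    · have heq : (fun t => t ^ (α - 1) * Real.Gamma (1 - α)) =ᶠ[ae ν]
          (fun t => ∫ x, ‖f (x, t)‖ ∂μ) := by
        refine (ae_restrict_iff' measurableSet_Ioc).2 (Filter.Eventually.of_forall ?_)
        intro t ht
        have ht0 : 0 < t := ha0.trans ht.1
        show t ^ (α - 1) * Real.Gamma (1 - α) = ∫ x, ‖f (x, t)‖ ∂μ
        rw [← houter t ht0]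
        have : (fun x => f (x, t)) =ᶠ[ae μ] (fun x => ‖f (x, t)‖) := by
          refine (ae_restrict_iff' measurableSet_Ioi).2
            (Filter.Eventually.of_forall fun x hx => ?_)
          show f (x, t) = ‖f (x, t)‖
          rw [Real.norm_eq_abs, abs_of_nonneg]
          have hx0 : (0:ℝ) < x := hx
          show 0 ≤ x ^ (-α) * Real.exp (-(t * x))
          positivity
        exact integral_congr_ae this
      refine Integrable.congr ?_ heq
      apply Integrable.mul_const
      apply (intervalIntegrable_iff_integrableOn_Ioc_of_le ha1.le).mp
      apply intervalIntegral.intervalIntegrable_rpow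
      right
      rw [Set.uIcc_of_le ha1.le]
      intro h
      exact absurd h.1 (by linarith)
  -- conclude
  have hInt1 : Integrable (fun x => ∫ t, f (x, t) ∂ν) μ := hprod.integral_prod_left
  have hae : ∀ᵐ x ∂μ, (fun x => ∫ t, f (x, t) ∂ν) x =
      (fun x => (Real.exp (-(a * x)) - Real.exp (-x)) * x ^ (-α - 1)) x := by
    refine (ae_restrict_iff' measurableSet_Ioi).2 (Filter.Eventually.of_forall ?_)
    exact fun x hx => hinner x hx
  constructor
  · exact hInt1.congr hae
  · rw [← integral_congr_ae hae]
    have hswap : ∫ x, (∫ t, f (x, t) ∂ν) ∂μ = ∫ t, (∫ x, f (x, t) ∂μ) ∂ν :=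
      integral_integral_swap (f := fun x t => f (x, t)) hprod
    rw [show (∫ x in Set.Ioi (0:ℝ), ∫ t, f (x, t) ∂ν) = ∫ x, (∫ t, f (x, t) ∂ν) ∂μ from rfl,
      hswap]
    have hcong : ∫ t, (∫ x, f (x, t) ∂μ) ∂ν = ∫ t in Ioc a 1, t ^ (α - 1) * Real.Gamma (1 - α) := by
      refine integral_congr_ae ((ae_restrict_iff' measurableSet_Ioc).2
        (Filter.Eventually.of_forall fun t ht => ?_))
      exact houter t (ha0.trans ht.1)
    rw [hcong, ← intervalIntegral.integral_of_le ha1.le, intervalIntegral.integral_mul_const,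
      integral_rpow (Or.inr ⟨by intro h; apply hα0; linarith [sub_eq_iff_eq_add.mp h],
        by rw [Set.uIcc_of_le ha1.le]; intro h; exact absurd h.1 (by linarith)⟩)]
    have h1 : α - 1 + 1 = α := by ring
    rw [h1, Real.one_rpow, show (1:ℝ) - α = -α + 1 by ring,
      Real.Gamma_add_one (neg_ne_zero.mpr hα0)]
    field_simp
    ring
end

section
/- Let z, w ∈ (0,1) with z ≠ w. If w < z, then there exists p₀ > 0 such that for all p ∈ (0, p₀] and all x ≥ 0, (1 − p(1−z))^{x/p} − (1 − p)^{x/p} ≥ e^{(w−1)x} − e^{−x}. If w > z, then there exists p₀ > 0 such that for all p ∈ (0, p₀] and all x ≥ 0, (1 − p(1−z))^{x/p} − (1 − p)^{x/p} ≤ e^{(w−1)x} − e^{−x}. -/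
open Real Set

theorem elementary_exponential_inequalities
    (z w : ℝ) (hz : z ∈ Set.Ioo (0 : ℝ) 1) (hw : w ∈ Set.Ioo (0 : ℝ) 1) (hzw : z ≠ w) :
    (w < z → ∃ p₀ > (0 : ℝ), ∀ p ∈ Set.Ioc (0 : ℝ) p₀, ∀ x : ℝ, 0 ≤ x →
      Real.exp ((w - 1) * x) - Real.exp (-x) ≤
        (1 - p * (1 - z)) ^ (x / p) - (1 - p) ^ (x / p)) ∧
    (z < w → ∃ p₀ > (0 : ℝ), ∀ p ∈ Set.Ioc (0 : ℝ) p₀, ∀ x : ℝ, 0 ≤ x →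
      (1 - p * (1 - z)) ^ (x / p) - (1 - p) ^ (x / p) ≤
        Real.exp ((w - 1) * x) - Real.exp (-x)) := by
  obtain ⟨hz0, hz1⟩ := hz
  obtain ⟨hw0, hw1⟩ := hw
  constructor
  · -- case w < z
    intro hwz
    refine ⟨min (z - w) (1/2), lt_min (by linarith) (by norm_num), ?_⟩
    rintro p ⟨hp0, hp1⟩ x hx
    have hp2 : p ≤ 1/2 := hp1.trans (min_le_right _ _)
    have hpzw : p ≤ z - w := hp1.trans (min_le_left _ _)
    have h1 : 0 < 1 - p := by linarith
    have h2 : 0 < 1 - p * (1 - z) := by nlinarith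
    have hxp : 0 ≤ x / p := div_nonneg hx hp0.le
    have hA : (1 - p) ^ (x / p) ≤ Real.exp (-x) := by
      rw [Real.rpow_def_of_pos h1]
      apply Real.exp_le_exp.mpr
      have hlog : Real.log (1 - p) ≤ -p := by
        have := Real.log_le_sub_one_of_pos h1
        linarith
      calc Real.log (1 - p) * (x / p) ≤ (-p) * (x / p) :=
            mul_le_mul_of_nonneg_right hlog hxp
        _ = -x := by field_simp
    have hB : Real.exp ((w - 1) * x) ≤ (1 - p * (1 - z)) ^ (x / p) := by
      rw [Real.rpow_def_of_pos h2]
      apply Real.exp_le_exp.mpr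
      have hinvpos : 0 < (1 - p * (1 - z))⁻¹ := by positivity
      have hlog1 := Real.log_le_sub_one_of_pos hinvpos
      rw [Real.log_inv] at hlog1
      have htinv : (1 - p * (1 - z))⁻¹ ≤ 1 + (1 - w) * p := by
        rw [inv_eq_one_div, div_le_iff₀ h2]
        have hq : (1 - w) * (1 - z) * p ≤ z - w := by
          have h5 : (1 - w) * (1 - z) * p ≤ p := by nlinarith [mul_pos hp0 hw0, mul_pos hp0 hz0, mul_le_mul_of_nonneg_left hz1.le (mul_pos hp0 hw0).le]
          linarith
        nlinarith [mul_le_mul_of_nonneg_left hq hp0.le]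
      have hlog2 : (w - 1) * p ≤ Real.log (1 - p * (1 - z)) := by linarith
      calc (w - 1) * x = ((w - 1) * p) * (x / p) := by field_simp
        _ ≤ Real.log (1 - p * (1 - z)) * (x / p) :=
            mul_le_mul_of_nonneg_right hlog2 hxp
    linarith
  · -- case z < w
    intro hzw'
    refine ⟨min ((w - z) / 2) (1/2), lt_min (by linarith) (by norm_num), ?_⟩
    rintro p ⟨hp0, hp1⟩ x hx
    have hp2 : p ≤ 1/2 := hp1.trans (min_le_right _ _)
    have hpzw : 2 * p ≤ w - z := by
      have := hp1.trans (min_le_left _ _); linarith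
    have h1 : 0 < 1 - p := by linarith
    have h2 : 0 < 1 - p * (1 - z) := by nlinarith
    have hxp : 0 ≤ x / p := div_nonneg hx hp0.le
    have hA : (1 - p * (1 - z)) ^ (x / p) ≤ Real.exp ((z - 1) * x) := by
      rw [Real.rpow_def_of_pos h2]
      apply Real.exp_le_exp.mpr
      have hlog : Real.log (1 - p * (1 - z)) ≤ -(p * (1 - z)) := by
        have := Real.log_le_sub_one_of_pos h2
        linarith
      calc Real.log (1 - p * (1 - z)) * (x / p) ≤ (-(p * (1 - z))) * (x / p) :=
            mul_le_mul_of_nonneg_right hlog hxp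
        _ = (z - 1) * x := by field_simp; ring
    have hB : Real.exp (-(1 + 2 * p) * x) ≤ (1 - p) ^ (x / p) := by
      rw [Real.rpow_def_of_pos h1]
      apply Real.exp_le_exp.mpr
      have hinvpos : 0 < (1 - p)⁻¹ := by positivity
      have hlog1 := Real.log_le_sub_one_of_pos hinvpos
      rw [Real.log_inv] at hlog1
      have htinv : (1 - p)⁻¹ ≤ 1 + p + 2 * p ^ 2 := by
        rw [inv_eq_one_div, div_le_iff₀ h1]
        nlinarith
      have hlog2 : -p - 2 * p ^ 2 ≤ Real.log (1 - p) := by linarith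
      calc (-(1 + 2 * p)) * x = (-p - 2 * p ^ 2) * (x / p) := by field_simp; ring
        _ ≤ Real.log (1 - p) * (x / p) :=
            mul_le_mul_of_nonneg_right hlog2 hxp
    -- now: exp((z-1)x) - exp(-(1+2p)x) ≤ exp((w-1)x) - exp(-x)
    have e1 : Real.exp (-(1 + 2 * p) * x) = Real.exp (-x) * Real.exp (-(2 * p * x)) := by
      rw [← Real.exp_add]; ring_nf
    have e2 : Real.exp ((w - 1) * x) = Real.exp ((z - 1) * x) * Real.exp ((w - z) * x) := by
      rw [← Real.exp_add]; ring_nf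
    have f1 : 1 - Real.exp (-(2 * p * x)) ≤ 2 * p * x := by
      have := Real.add_one_le_exp (-(2 * p * x)); linarith
    have f2 : (w - z) * x ≤ Real.exp ((w - z) * x) - 1 := by
      have := Real.add_one_le_exp ((w - z) * x); linarith
    have f3 : Real.exp (-x) ≤ Real.exp ((z - 1) * x) := by
      apply Real.exp_le_exp.mpr; nlinarith
    have g1 : Real.exp (-x) * (1 - Real.exp (-(2 * p * x))) ≤ Real.exp (-x) * (2 * p * x) :=
      mul_le_mul_of_nonneg_left f1 (Real.exp_pos _).le
    have g2 : Real.exp ((z - 1) * x) * ((w - z) * x) ≤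
        Real.exp ((z - 1) * x) * (Real.exp ((w - z) * x) - 1) :=
      mul_le_mul_of_nonneg_left f2 (Real.exp_pos _).le
    have key : Real.exp (-x) * (2 * p * x) ≤ Real.exp ((z - 1) * x) * ((w - z) * x) := by
      apply mul_le_mul f3 (by nlinarith) (by positivity) (Real.exp_pos _).le
    nlinarith [hA, hB, g1, g2, key, e1, e2]
end

section
/- Let m ∈ (0,1), C ≥ 1, and let f : (0,∞) → [0,∞) be measurable such that for every n ∈ ℤ, either f vanishes identically on the interval [mⁿ, m^{n−1}), or f is strictly positive there and C^{−1} ≤ f(x)/f(y) ≤ C for all x, y ∈ [mⁿ, m^{n−1}). Let Λ be a locally finite Borel measure on (0,∞) satisfying Λ(A) = Λ(mA) for every Borel set A ⊆ (0,∞) and Λ([m,1)) ≠ 0. Then, with I₁ = (1/Λ([m,1)))·∫₀^∞ f dΛ and I₂ = (1/log(m^{−1}))·∫₀^∞ f(x)·x^{−1} dx (both taken as values in [0,∞]), one has C^{−1}·I₂ ≤ I₁ ≤ C·I₂. -/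
open MeasureTheory Real Set
open scoped ENNReal

/-- `Λ` is a locally finite Borel measure on `(0,∞)` (viewed as a measure on `ℝ` giving
no mass to `(-∞,0]` and finite mass to compact subsets of `(0,∞)`). -/
def IsLocFiniteOnPos (Λ : Measure ℝ) : Prop :=
  Λ (Set.Iic 0) = 0 ∧ ∀ K : Set ℝ, IsCompact K → K ⊆ Set.Ioi 0 → Λ K < ⊤

/-- `Λ(A) = Λ(mA)` for every Borel set `A ⊆ (0,∞)`. -/
def ScaleInvariant (m : ℝ) (Λ : Measure ℝ) : Prop :=
  ∀ A : Set ℝ, MeasurableSet A → A ⊆ Set.Ioi 0 →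
    Λ A = Λ ((fun x => m * x) '' A)

private lemma ennreal_inv_swap {a b x y : ℝ≥0∞} (ha0 : a ≠ 0) (hatop : a ≠ ⊤)
    (hb0 : b ≠ 0) (hbtop : b ≠ ⊤) (h : a * x ≤ b * y) : b⁻¹ * x ≤ a⁻¹ * y := by
  calc b⁻¹ * x = a⁻¹ * b⁻¹ * (a * x) := by
        rw [show a⁻¹ * b⁻¹ * (a * x) = (a⁻¹ * a) * (b⁻¹ * x) by ring,
          ENNReal.inv_mul_cancel ha0 hatop, one_mul]
    _ ≤ a⁻¹ * b⁻¹ * (b * y) := mul_le_mul_right h _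
    _ = a⁻¹ * y := by
        rw [show a⁻¹ * b⁻¹ * (b * y) = (b⁻¹ * b) * (a⁻¹ * y) by ring,
          ENNReal.inv_mul_cancel hb0 hbtop, one_mul]

private lemma lintegral_inv_Ico {a b : ℝ} (ha : 0 < a) (hab : a < b) :
    ∫⁻ y in Set.Ico a b, ENNReal.ofReal y⁻¹ = ENNReal.ofReal (Real.log (b / a)) := by
  have hb : 0 < b := ha.trans hab
  have hcont : ContinuousOn (fun y : ℝ => y⁻¹) (Set.Icc a b) := by
    apply ContinuousOn.inv₀ continuousOn_id
    intro x hx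
    exact (lt_of_lt_of_le ha hx.1).ne'
  have hint : IntegrableOn (fun y : ℝ => y⁻¹) (Set.Ico a b) :=
    (hcont.integrableOn_compact isCompact_Icc).mono_set Set.Ico_subset_Icc_self
  have hnn : 0 ≤ᵐ[volume.restrict (Set.Ico a b)] fun y : ℝ => y⁻¹ := by
    filter_upwards [ae_restrict_mem measurableSet_Ico] with y hy
    exact inv_nonneg.2 (le_trans ha.le hy.1)
  rw [← ofReal_integral_eq_lintegral_ofReal hint hnn]
  congr 1
  rw [setIntegral_congr_set Ico_ae_eq_Ioc, ← intervalIntegral.integral_of_le hab.le,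
    integral_inv_of_pos ha hb]

theorem selfsimilar_integral_comparison
    (m : ℝ) (hm : m ∈ Set.Ioo (0 : ℝ) 1) (C : ℝ) (hC : 1 ≤ C)
    (f : ℝ → ℝ) (hmeas : Measurable f) (hf0 : ∀ x, 0 ≤ f x)
    (hreg : ∀ n : ℤ,
      (∀ x ∈ Set.Ico (m ^ n) (m ^ (n - 1)), f x = 0) ∨
      ((∀ x ∈ Set.Ico (m ^ n) (m ^ (n - 1)), 0 < f x) ∧
        ∀ x ∈ Set.Ico (m ^ n) (m ^ (n - 1)), ∀ y ∈ Set.Ico (m ^ n) (m ^ (n - 1)),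
          C⁻¹ ≤ f x / f y ∧ f x / f y ≤ C))
    (Λ : Measure ℝ) (hΛ : IsLocFiniteOnPos Λ) (hs : ScaleInvariant m Λ)
    (hne : Λ (Set.Ico m 1) ≠ 0) :
    ENNReal.ofReal C⁻¹ *
        ((ENNReal.ofReal (Real.log m⁻¹))⁻¹ *
          ∫⁻ x in Set.Ioi (0 : ℝ), ENNReal.ofReal (f x / x)) ≤
      (Λ (Set.Ico m 1))⁻¹ * ∫⁻ x in Set.Ioi (0 : ℝ), ENNReal.ofReal (f x) ∂Λ ∧
    (Λ (Set.Ico m 1))⁻¹ * ∫⁻ x in Set.Ioi (0 : ℝ), ENNReal.ofReal (f x) ∂Λ ≤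
      ENNReal.ofReal C *
        ((ENNReal.ofReal (Real.log m⁻¹))⁻¹ *
          ∫⁻ x in Set.Ioi (0 : ℝ), ENNReal.ofReal (f x / x)) := by
  obtain ⟨hm0, hm1⟩ := hm
  have hC0 : (0 : ℝ) < C := lt_of_lt_of_le one_pos hC
  have hminv : 1 < m⁻¹ := one_lt_inv_iff₀.2 ⟨hm0, hm1⟩
  have hlog : 0 < Real.log m⁻¹ := Real.log_pos hminv
  set ℓ : ℝ≥0∞ := ENNReal.ofReal (Real.log m⁻¹) with hℓdef
  have hℓ0 : ℓ ≠ 0 := by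
    simp only [hℓdef, ne_eq, ENNReal.ofReal_eq_zero, not_le]; exact hlog
  have hℓtop : ℓ ≠ ⊤ := ENNReal.ofReal_ne_top
  set c : ℝ≥0∞ := ENNReal.ofReal C with hcdef
  have hc0 : c ≠ 0 := by
    simp only [hcdef, ne_eq, ENNReal.ofReal_eq_zero, not_le]; exact hC0
  have hctop : c ≠ ⊤ := ENNReal.ofReal_ne_top
  set L : ℝ≥0∞ := Λ (Set.Ico m 1) with hLdef
  have hLtop : L ≠ ⊤ := by
    have h1 : Λ (Set.Icc m 1) < ⊤ :=
      hΛ.2 (Set.Icc m 1) isCompact_Icc (fun x hx => lt_of_lt_of_le hm0 hx.1)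
    exact (lt_of_le_of_lt (measure_mono Set.Ico_subset_Icc_self) h1).ne
  set s : ℤ → Set ℝ := fun n => Set.Ico (m ^ n) (m ^ (n - 1)) with hsdef
  have hmpow : ∀ n : ℤ, (0 : ℝ) < m ^ n := fun n => zpow_pos hm0 n
  have hpow_eq : ∀ n : ℤ, m ^ (n - 1) = m ^ n * m⁻¹ := by
    intro n
    rw [zpow_sub₀ hm0.ne', zpow_one, div_eq_mul_inv]
  have hlt : ∀ n : ℤ, m ^ n < m ^ (n - 1) := by
    intro n
    rw [hpow_eq n]
    exact lt_mul_of_one_lt_right (hmpow n) hminv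
  have hsub : ∀ n : ℤ, s n ⊆ Set.Ioi (0 : ℝ) := by
    intro n x hx
    exact lt_of_lt_of_le (hmpow n) hx.1
  have hspos : ∀ n : ℤ, ∀ y ∈ s n, (0 : ℝ) < y := fun n y hy => hsub n hy
  -- union and disjointness
  have hunion : (⋃ n : ℤ, s n) = Set.Ioi (0 : ℝ) := by
    ext x
    simp only [Set.mem_iUnion, Set.mem_Ioi]
    constructor
    · rintro ⟨n, hx⟩
      exact hsub n hx
    · intro hx
      obtain ⟨n, h1, h2⟩ := exists_mem_Ico_zpow hx hminv
      refine ⟨-n, ?_, ?_⟩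
      · rwa [zpow_neg, ← inv_zpow]
      · rw [show -n - 1 = -(n + 1) by ring, zpow_neg, ← inv_zpow]
        exact h2
  have hdisj : Pairwise (Function.onFun Disjoint s) := by
    have key : ∀ i j : ℤ, i < j → Disjoint (s i) (s j) := by
      intro i j hij
      rw [hsdef]
      rw [Set.Ico_disjoint_Ico]
      have : m ^ (j - 1) ≤ m ^ i :=
        zpow_le_zpow_right_of_le_one₀ hm0 hm1.le (by omega)
      exact le_trans (min_le_right _ _) (le_trans this (le_max_left _ _))
    intro i j hij
    rcases lt_or_gt_of_ne hij with h | h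
    · exact key i j h
    · exact (key j i h).symm
  -- the measure of each block equals L
  have hstep : ∀ n : ℤ, Λ (s n) = Λ (s (n + 1)) := by
    intro n
    have h := hs (s n) measurableSet_Ico (hsub n)
    rw [h]
    congr 1
    have ha : m * m ^ n = m ^ (n + 1) := by rw [← zpow_one_add₀ hm0.ne', add_comm]
    have hb : m * m ^ (n - 1) = m ^ n := by
      rw [← zpow_one_add₀ hm0.ne', show (1 + (n - 1) : ℤ) = n by ring]
    rw [hsdef]
    simp only
    rw [image_mul_left_Ico hm0, ha, hb, show (n + 1 - 1 : ℤ) = n by ring]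
  have hconst : ∀ n : ℤ, Λ (s n) = L := by
    have h1 : Λ (s 1) = L := by
      rw [hsdef, hLdef]
      norm_num
    intro n
    induction n using Int.induction_on with
    | zero => rw [hstep 0]; exact h1
    | succ k ih => rw [← hstep k]; exact ih
    | pred k ih =>
        have e : (-(k : ℤ) - 1) + 1 = -(k : ℤ) := by ring
        rw [hstep (-(k : ℤ) - 1), e]
        exact ih
  -- the log integral over each block
  have hlogint : ∀ n : ℤ, ∫⁻ y in s n, ENNReal.ofReal y⁻¹ = ℓ := by
    intro n
    rw [lintegral_inv_Ico (hmpow n) (hlt n)]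
    congr 1
    rw [hpow_eq n, mul_comm, mul_div_assoc, div_self (hmpow n).ne', mul_one]
  -- measurability helpers
  have hmg : Measurable fun y : ℝ => ENNReal.ofReal (f y / y) :=
    (hmeas.div measurable_id).ennreal_ofReal
  have hminvmeas : Measurable fun y : ℝ => ENNReal.ofReal y⁻¹ :=
    measurable_inv.ennreal_ofReal
  -- termwise inequalities
  have key1 : ∀ n : ℤ, ℓ * ∫⁻ x in s n, ENNReal.ofReal (f x) ∂Λ ≤
      (c * L) * ∫⁻ y in s n, ENNReal.ofReal (f y / y) := by
    intro n
    rcases hreg n with h0 | ⟨hpos, hrat⟩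
    · have hz : ∫⁻ x in s n, ENNReal.ofReal (f x) ∂Λ = 0 := by
        rw [setLIntegral_congr_fun measurableSet_Ico
          (fun x hx => by rw [h0 x hx, ENNReal.ofReal_zero]),
          lintegral_zero]
      rw [hz, mul_zero]
      exact zero_le
    · have hub : ∀ x ∈ s n, ∀ y ∈ s n, f x ≤ C * f y := by
        intro x hx y hy
        have h := (hrat x hx y hy).2
        have hy' := hpos y hy
        rw [div_le_iff₀ hy'] at h
        linarith [h]
      have hAn : ∀ y ∈ s n, (∫⁻ x in s n, ENNReal.ofReal (f x) ∂Λ) ≤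
          ENNReal.ofReal (C * f y) * L := by
        intro y hy
        calc ∫⁻ x in s n, ENNReal.ofReal (f x) ∂Λ
            ≤ ∫⁻ _x in s n, ENNReal.ofReal (C * f y) ∂Λ :=
              setLIntegral_mono measurable_const fun x hx =>
                ENNReal.ofReal_le_ofReal (hub x hx y hy)
          _ = ENNReal.ofReal (C * f y) * Λ (s n) := setLIntegral_const _ _
          _ = ENNReal.ofReal (C * f y) * L := by rw [hconst n]
      calc ℓ * ∫⁻ x in s n, ENNReal.ofReal (f x) ∂Λ
          = ∫⁻ y in s n, ENNReal.ofReal y⁻¹ *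
              ∫⁻ x in s n, ENNReal.ofReal (f x) ∂Λ := by
            rw [lintegral_mul_const _ hminvmeas, hlogint n, mul_comm]
        _ ≤ ∫⁻ y in s n, (c * L) * ENNReal.ofReal (f y / y) :=
            setLIntegral_mono (measurable_const.mul hmg) (by
              intro y hy
              have hy0 : (0 : ℝ) < y := hspos n y hy
              calc ENNReal.ofReal y⁻¹ * ∫⁻ x in s n, ENNReal.ofReal (f x) ∂Λ
                  ≤ ENNReal.ofReal y⁻¹ * (ENNReal.ofReal (C * f y) * L) :=
                    mul_le_mul_right (hAn y hy) _
                _ = (c * L) * ENNReal.ofReal (f y / y) := by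
                    rw [← mul_assoc, ← ENNReal.ofReal_mul (inv_nonneg.2 hy0.le),
                      show y⁻¹ * (C * f y) = C * (f y / y) by rw [div_eq_mul_inv]; ring,
                      ENNReal.ofReal_mul hC0.le]
                    ring)
        _ = (c * L) * ∫⁻ y in s n, ENNReal.ofReal (f y / y) :=
            lintegral_const_mul _ hmg
  have key2 : ∀ n : ℤ, L * ∫⁻ y in s n, ENNReal.ofReal (f y / y) ≤
      (c * ℓ) * ∫⁻ x in s n, ENNReal.ofReal (f x) ∂Λ := by
    intro n
    rcases hreg n with h0 | ⟨hpos, hrat⟩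
    · have hz : ∫⁻ y in s n, ENNReal.ofReal (f y / y) = 0 := by
        rw [setLIntegral_congr_fun measurableSet_Ico
          (fun y hy => by rw [h0 y hy, zero_div, ENNReal.ofReal_zero]),
          lintegral_zero]
      rw [hz, mul_zero]
      exact zero_le
    · have hub : ∀ x ∈ s n, ∀ y ∈ s n, f x ≤ C * f y := by
        intro x hx y hy
        have h := (hrat x hx y hy).2
        have hy' := hpos y hy
        rw [div_le_iff₀ hy'] at h
        linarith [h]
      have hBn : ∀ x ∈ s n, (∫⁻ y in s n, ENNReal.ofReal (f y / y)) ≤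
          ENNReal.ofReal (C * f x) * ℓ := by
        intro x hx
        calc ∫⁻ y in s n, ENNReal.ofReal (f y / y)
            ≤ ∫⁻ y in s n, ENNReal.ofReal (C * f x) * ENNReal.ofReal y⁻¹ :=
              setLIntegral_mono (measurable_const.mul hminvmeas) (by
                intro y hy
                have hy0 : (0 : ℝ) < y := hspos n y hy
                rw [← ENNReal.ofReal_mul (mul_nonneg hC0.le (hf0 x))]
                apply ENNReal.ofReal_le_ofReal
                rw [div_eq_mul_inv]
                exact mul_le_mul_of_nonneg_right (hub y hy x hx)
                  (inv_nonneg.2 hy0.le))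
          _ = ENNReal.ofReal (C * f x) * ℓ := by
              rw [lintegral_const_mul _ hminvmeas, hlogint n]
      calc L * ∫⁻ y in s n, ENNReal.ofReal (f y / y)
          = ∫⁻ _x in s n, (∫⁻ y in s n, ENNReal.ofReal (f y / y)) ∂Λ := by
            rw [setLIntegral_const, hconst n, mul_comm]
        _ ≤ ∫⁻ x in s n, (c * ℓ) * ENNReal.ofReal (f x) ∂Λ :=
            setLIntegral_mono (measurable_const.mul hmeas.ennreal_ofReal) (by
              intro x hx
              calc (∫⁻ y in s n, ENNReal.ofReal (f y / y))
                  ≤ ENNReal.ofReal (C * f x) * ℓ := hBn x hx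
                _ = (c * ℓ) * ENNReal.ofReal (f x) := by
                    rw [ENNReal.ofReal_mul hC0.le]; ring)
        _ = (c * ℓ) * ∫⁻ x in s n, ENNReal.ofReal (f x) ∂Λ :=
            lintegral_const_mul _ hmeas.ennreal_ofReal
  -- decompose the integrals over (0,∞)
  have hA : ∫⁻ x in Set.Ioi (0 : ℝ), ENNReal.ofReal (f x) ∂Λ =
      ∑' n : ℤ, ∫⁻ x in s n, ENNReal.ofReal (f x) ∂Λ := by
    rw [← hunion, lintegral_iUnion (fun n => measurableSet_Ico) hdisj]
  have hB : ∫⁻ x in Set.Ioi (0 : ℝ), ENNReal.ofReal (f x / x) =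
      ∑' n : ℤ, ∫⁻ x in s n, ENNReal.ofReal (f x / x) := by
    rw [← hunion, lintegral_iUnion (fun n => measurableSet_Ico) hdisj]
  have g1 : ℓ * ∫⁻ x in Set.Ioi (0 : ℝ), ENNReal.ofReal (f x) ∂Λ ≤
      (c * L) * ∫⁻ x in Set.Ioi (0 : ℝ), ENNReal.ofReal (f x / x) := by
    rw [hA, hB, ← ENNReal.tsum_mul_left, ← ENNReal.tsum_mul_left]
    exact ENNReal.tsum_le_tsum key1
  have g2 : L * ∫⁻ x in Set.Ioi (0 : ℝ), ENNReal.ofReal (f x / x) ≤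
      (c * ℓ) * ∫⁻ x in Set.Ioi (0 : ℝ), ENNReal.ofReal (f x) ∂Λ := by
    rw [hA, hB, ← ENNReal.tsum_mul_left, ← ENNReal.tsum_mul_left]
    exact ENNReal.tsum_le_tsum key2
  have hcl0 : c * ℓ ≠ 0 := mul_ne_zero hc0 hℓ0
  have hcltop : c * ℓ ≠ ⊤ := ENNReal.mul_ne_top hctop hℓtop
  have hcL0 : c * L ≠ 0 := mul_ne_zero hc0 hne
  have hcLtop : c * L ≠ ⊤ := ENNReal.mul_ne_top hctop hLtop
  constructor
  · -- lower bound
    have h := ennreal_inv_swap hne hLtop hcl0 hcltop g2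
    rw [ENNReal.mul_inv (Or.inl hc0) (Or.inl hctop), mul_assoc] at h
    rw [ENNReal.ofReal_inv_of_pos hC0]
    exact h
  · -- upper bound
    have h := ennreal_inv_swap hℓ0 hℓtop hcL0 hcLtop g1
    rw [ENNReal.mul_inv (Or.inl hc0) (Or.inl hctop), mul_assoc] at h
    -- h : c⁻¹ * (L⁻¹ * A) ≤ ℓ⁻¹ * B
    have h2 := mul_le_mul_right h c
    rw [← mul_assoc, ENNReal.mul_inv_cancel hc0 hctop, one_mul] at h2
    exact h2
end
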